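/- arXiv:math/0403035 — 11 statements merged into one kernel-verified Lean document; each statement's English description precedes it below -/
import Mathlib

section
/- Under the stated hypotheses, 0 is an asymptotically stable fixed point of the system x_{k+1} = f(x_k): (stability) for every ε > 0 there exists δ > 0 such that for every x with ‖x‖ < δ and every k ∈ ℕ one has ‖f⁽ᵏ⁾(x)‖ < ε; and (local attractivity) there exists r > 0 such that for every x with ‖x‖ < r, f⁽ᵏ⁾(x) → 0 as k → ∞. -/
open Filter Topology

/-- Under the stated hypotheses, `0` is an asymptotically stable fixed point of
the discrete dynamical system `x_{k+1} = f (x_k)`: stability plus local attractivity. -/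
theorem stmt_0 (n : ℕ) (hn : 1 ≤ n)
    (Ω : Set (EuclideanSpace ℝ (Fin n))) (hΩ : IsOpen Ω)
    (h0Ω : (0 : EuclideanSpace ℝ (Fin n)) ∈ Ω)
    (f : EuclideanSpace ℝ (Fin n) → EuclideanSpace ℝ (Fin n))
    (hf : AnalyticOn ℝ f Ω) (hmaps : Set.MapsTo f Ω Ω) (hf0 : f 0 = 0)
    (A : EuclideanSpace ℝ (Fin n) →L[ℝ] EuclideanSpace ℝ (Fin n))
    (hA : HasFDerivAt f A 0)
    (c ρ : ℝ) (hc : 1 ≤ c) (hρ : ρ ∈ Set.Ioo (0 : ℝ) 1)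
    (hAk : ∀ k : ℕ, ‖A ^ k‖ ≤ c * ρ ^ k) :
    (∀ ε > 0, ∃ δ > 0, ∀ x : EuclideanSpace ℝ (Fin n), ‖x‖ < δ →
      ∀ k : ℕ, ‖f^[k] x‖ < ε) ∧
    (∃ r > 0, ∀ x : EuclideanSpace ℝ (Fin n), ‖x‖ < r →
      Tendsto (fun k => f^[k] x) atTop (𝓝 0)) := by
  classical
  obtain ⟨hρ0, hρ1⟩ := hρ
  have hc0 : (0:ℝ) < c := lt_of_lt_of_le one_pos hc
  have hfix : ∀ k : ℕ, f^[k] 0 = 0 := fun k => Function.iterate_fixed hf0 k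
  -- derivative of iterates
  have hDer : ∀ k : ℕ, HasFDerivAt (f^[k]) (A ^ k) 0 := by
    intro k
    induction k with
    | zero =>
      simpa [ContinuousLinearMap.one_def] using hasFDerivAt_id
        (0 : EuclideanSpace ℝ (Fin n))
    | succ k ih =>
      have h2 : HasFDerivAt f A (f^[k] 0) := by rw [hfix k]; exact hA
      have h3 := h2.comp 0 ih
      rw [Function.iterate_succ']
      rw [pow_succ']
      exact h3
  -- smallness extraction
  have key : ∀ k : ℕ, ∀ ε : ℝ, 0 < ε → ∃ δ > 0,
      ∀ x : EuclideanSpace ℝ (Fin n), ‖x‖ < δ →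
        ‖f^[k] x - (A ^ k) x‖ ≤ ε * ‖x‖ := by
    intro k ε hε
    have h := (hasFDerivAt_iff_isLittleO_nhds_zero.mp (hDer k))
    have h2 := h.def hε
    rw [Metric.eventually_nhds_iff] at h2
    obtain ⟨δ, hδ, hδ'⟩ := h2
    refine ⟨δ, hδ, fun x hx => ?_⟩
    have := hδ' (show dist x 0 < δ by rwa [dist_zero_right])
    simpa [hfix k] using this
  -- pointwise norm bound for A^k
  have hAle : ∀ j : ℕ, ∀ x : EuclideanSpace ℝ (Fin n), ‖(A ^ j) x‖ ≤ c * ‖x‖ := by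
    intro j x
    calc ‖(A ^ j) x‖ ≤ ‖A ^ j‖ * ‖x‖ := (A ^ j).le_opNorm x
    _ ≤ (c * ρ ^ j) * ‖x‖ := by
        gcongr
        exact hAk j
    _ ≤ c * ‖x‖ := by
        have h1 : ρ ^ j ≤ 1 := pow_le_one₀ hρ0.le hρ1.le
        nlinarith [norm_nonneg x, mul_nonneg hc0.le (norm_nonneg x),
          mul_nonneg (mul_nonneg hc0.le (sub_nonneg.mpr h1)) (norm_nonneg x)]
  -- choose m with c * ρ ^ m < 1/2, m ≥ 1
  obtain ⟨m0, hm0⟩ := exists_pow_lt_of_lt_one (show (0:ℝ) < 1/(2*c) by positivity) hρ1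
  set m := m0 + 1 with hm
  have hmpos : 0 < m := Nat.succ_pos _
  have hcm : c * ρ ^ m < 1/2 := by
    have h1 : ρ ^ m ≤ ρ ^ m0 := pow_le_pow_of_le_one hρ0.le hρ1.le (Nat.le_succ _)
    have : c * ρ ^ m0 < c * (1/(2*c)) := by
      apply mul_lt_mul_of_pos_left hm0 hc0
    have h2 : c * (1/(2*c)) = 1/2 := by field_simp
    nlinarith
  -- contraction for m-th iterate
  obtain ⟨δ0, hδ0, hδ0'⟩ := key m (1/4) (by norm_num)
  have step0 : ∀ x : EuclideanSpace ℝ (Fin n), ‖x‖ < δ0 → ‖f^[m] x‖ ≤ (3/4) * ‖x‖ := by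
    intro x hx
    have h1 := hδ0' x hx
    have h2 : ‖(A ^ m) x‖ ≤ (1/2) * ‖x‖ := by
      calc ‖(A ^ m) x‖ ≤ ‖A ^ m‖ * ‖x‖ := (A ^ m).le_opNorm x
      _ ≤ (c * ρ ^ m) * ‖x‖ := by gcongr; exact hAk m
      _ ≤ (1/2) * ‖x‖ := by nlinarith [norm_nonneg x]
    calc ‖f^[m] x‖ = ‖f^[m] x - (A ^ m) x + (A ^ m) x‖ := by congr 1; abel
    _ ≤ ‖f^[m] x - (A ^ m) x‖ + ‖(A ^ m) x‖ := norm_add_le _ _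
    _ ≤ (1/4) * ‖x‖ + (1/2) * ‖x‖ := add_le_add h1 h2
    _ ≤ (3/4) * ‖x‖ := by nlinarith [norm_nonneg x]
  -- uniform linear bound for small iterates
  have unif : ∀ M : ℕ, ∃ δ > 0, ∀ j ≤ M, ∀ x : EuclideanSpace ℝ (Fin n),
      ‖x‖ < δ → ‖f^[j] x‖ ≤ (c + 1) * ‖x‖ := by
    intro M
    induction M with
    | zero =>
      refine ⟨1, one_pos, ?_⟩
      intro j hj x hx
      interval_cases j
      simp only [Function.iterate_zero, id_eq]
      nlinarith [norm_nonneg x]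
    | succ M ih =>
      obtain ⟨δ, hδ, hδ'⟩ := ih
      obtain ⟨δ', hδ'pos, hδ''⟩ := key (M+1) 1 one_pos
      refine ⟨min δ δ', lt_min hδ hδ'pos, ?_⟩
      intro j hj x hx
      rcases Nat.lt_or_ge j (M+1) with h | h
      · exact hδ' j (Nat.lt_succ_iff.mp h) x (hx.trans_le (min_le_left _ _))
      · have hj' : j = M+1 := le_antisymm hj h
        have h1 : ‖f^[j] x - (A ^ j) x‖ ≤ 1 * ‖x‖ := by
          rw [hj']; exact hδ'' x (hx.trans_le (min_le_right _ _))
        calc ‖f^[j] x‖ = ‖f^[j] x - (A ^ j) x + (A ^ j) x‖ := by congr 1; abel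
        _ ≤ ‖f^[j] x - (A ^ j) x‖ + ‖(A ^ j) x‖ := norm_add_le _ _
        _ ≤ 1 * ‖x‖ + c * ‖x‖ := add_le_add h1 (hAle j x)
        _ = (c + 1) * ‖x‖ := by ring
  obtain ⟨δ1, hδ1, hδ1'⟩ := unif m
  set r0 := min δ0 δ1 with hr0
  have hr0pos : 0 < r0 := lt_min hδ0 hδ1
  -- iterate of multiples of m
  have iter : ∀ q : ℕ, ∀ x : EuclideanSpace ℝ (Fin n), ‖x‖ < r0 →
      ‖f^[q*m] x‖ ≤ (3/4)^q * ‖x‖ ∧ ‖f^[q*m] x‖ < r0 := by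
    intro q
    induction q with
    | zero => intro x hx; simpa using hx
    | succ q ih =>
      intro x hx
      obtain ⟨ih1, ih2⟩ := ih x hx
      have heq : f^[(q+1)*m] x = f^[m] (f^[q*m] x) := by
        rw [show (q+1)*m = m + q*m by ring, Function.iterate_add_apply]
      have hs := step0 _ (ih2.trans_le (min_le_left _ _))
      constructor
      · rw [heq]
        calc ‖f^[m] (f^[q*m] x)‖ ≤ (3/4) * ‖f^[q*m] x‖ := hs
        _ ≤ (3/4) * ((3/4)^q * ‖x‖) := mul_le_mul_of_nonneg_left ih1 (by norm_num)
        _ = (3/4)^(q+1) * ‖x‖ := by ring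
      · rw [heq]
        calc ‖f^[m] (f^[q*m] x)‖ ≤ (3/4) * ‖f^[q*m] x‖ := hs
        _ < r0 := by nlinarith [norm_nonneg (f^[q*m] x), ih2]
  -- main estimate
  have main : ∀ N : ℕ, ∀ x : EuclideanSpace ℝ (Fin n), ‖x‖ < r0 →
      ‖f^[N] x‖ ≤ (c + 1) * ((3/4)^(N/m) * ‖x‖) := by
    intro N x hx
    obtain ⟨h1, h2⟩ := iter (N/m) x hx
    have heq : f^[N] x = f^[N % m] (f^[(N/m)*m] x) := by
      conv_lhs => rw [show N = N % m + (N/m)*m by rw [Nat.mod_add_div']]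
      rw [Function.iterate_add_apply]
    rw [heq]
    have hu := hδ1' (N % m) (le_of_lt (Nat.mod_lt _ hmpos)) _
      (h2.trans_le (min_le_right _ _))
    calc ‖f^[N % m] (f^[(N/m)*m] x)‖ ≤ (c+1) * ‖f^[(N/m)*m] x‖ := hu
    _ ≤ (c + 1) * ((3/4)^(N/m) * ‖x‖) := mul_le_mul_of_nonneg_left h1 (by linarith)
  constructor
  · -- stability
    intro ε hε
    refine ⟨min r0 (ε / (c+1)), lt_min hr0pos (by positivity), ?_⟩
    intro x hx k
    have hx0 : ‖x‖ < r0 := hx.trans_le (min_le_left _ _)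
    have hx1 : ‖x‖ < ε / (c+1) := hx.trans_le (min_le_right _ _)
    have h1 := main k x hx0
    have hpow : ((3:ℝ)/4)^(k/m) ≤ 1 := pow_le_one₀ (by norm_num) (by norm_num)
    have h2 : (c+1) * ((3/4)^(k/m) * ‖x‖) ≤ (c+1) * ‖x‖ :=
      mul_le_mul_of_nonneg_left (mul_le_of_le_one_left (norm_nonneg x) hpow) (by linarith)
    have h3 : (c+1) * ‖x‖ < ε := by
      calc (c+1) * ‖x‖ < (c+1) * (ε/(c+1)) := by
            apply mul_lt_mul_of_pos_left hx1 (by linarith)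
      _ = ε := by field_simp
    linarith
  · -- attractivity
    refine ⟨r0, hr0pos, ?_⟩
    intro x hx
    rw [tendsto_zero_iff_norm_tendsto_zero]
    have hdiv : Tendsto (fun N : ℕ => N / m) atTop atTop := by
      apply Filter.tendsto_atTop_atTop.mpr
      intro b
      exact ⟨b * m, fun a ha => (Nat.le_div_iff_mul_le hmpos).mpr ha⟩
    have hpow : Tendsto (fun N : ℕ => ((3:ℝ)/4)^(N/m)) atTop (𝓝 0) :=
      (tendsto_pow_atTop_nhds_zero_of_lt_one (by norm_num) (by norm_num)).comp hdiv
    have hg : Tendsto (fun N : ℕ => (c+1) * (((3:ℝ)/4)^(N/m) * ‖x‖)) atTop (𝓝 0) := by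
      have := (hpow.mul_const ‖x‖).const_mul (c+1)
      simpa using this
    refine squeeze_zero (fun N => norm_nonneg _) (fun N => main N x hx) hg
end

section
/- Under the stated hypotheses, 0 is locally exponentially attracting: there exist δ > 0, C ≥ 1 and α ∈ (0,1) such that for every x with ‖x‖ < δ and every k ∈ ℕ, one has f⁽ᵏ⁾(x) ∈ Ω and ‖f⁽ᵏ⁾(x)‖ ≤ C·αᵏ·‖x‖. -/
open Filter Topology

/-- `0` is locally exponentially attracting. -/
theorem stmt_2 (n : ℕ) (hn : 1 ≤ n)
    (Ω : Set (EuclideanSpace ℝ (Fin n))) (hΩ : IsOpen Ω)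
    (h0Ω : (0 : EuclideanSpace ℝ (Fin n)) ∈ Ω)
    (f : EuclideanSpace ℝ (Fin n) → EuclideanSpace ℝ (Fin n))
    (hf : AnalyticOn ℝ f Ω) (hmaps : Set.MapsTo f Ω Ω) (hf0 : f 0 = 0)
    (A : EuclideanSpace ℝ (Fin n) →L[ℝ] EuclideanSpace ℝ (Fin n))
    (hA : HasFDerivAt f A 0)
    (c ρ : ℝ) (hc : 1 ≤ c) (hρ : ρ ∈ Set.Ioo (0 : ℝ) 1)
    (hAk : ∀ k : ℕ, ‖A ^ k‖ ≤ c * ρ ^ k) :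
    ∃ δ > 0, ∃ C ≥ (1 : ℝ), ∃ α ∈ Set.Ioo (0 : ℝ) 1,
      ∀ x : EuclideanSpace ℝ (Fin n), ‖x‖ < δ →
        ∀ k : ℕ, f^[k] x ∈ Ω ∧ ‖f^[k] x‖ ≤ C * α ^ k * ‖x‖ := by
  obtain ⟨hρ0, hρ1⟩ := hρ
  set β : ℝ := (1 + ρ) / 2 with hβdef
  have hβρ : ρ < β := by rw [hβdef]; linarith
  have hβ1 : β < 1 := by rw [hβdef]; linarith
  have hβ0 : 0 < β := lt_trans hρ0 hβρ
  have hq0 : 0 ≤ ρ / β := div_nonneg hρ0.le hβ0.le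
  have hq1 : ρ / β < 1 := (div_lt_one hβ0).2 hβρ
  have h1q : 0 < 1 - ρ / β := by linarith
  set M : ℝ := c / (1 - ρ / β) with hMdef
  have hM0 : 0 < M := div_pos (by linarith) h1q
  have hM1 : 1 ≤ M := by
    rw [hMdef, le_div_iff₀ h1q]; linarith
  set ε : ℝ := (1 - β) / (2 * M) with hεdef
  have hε0 : 0 < ε := div_pos (by linarith) (by linarith)
  set α : ℝ := (1 + β) / 2 with hαdef
  have hα0 : 0 < α := by rw [hαdef]; linarith
  have hα1 : α < 1 := by rw [hαdef]; linarith
  have hMε : β + M * ε = α := by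
    rw [hεdef, hαdef]
    field_simp
    ring
  -- the adapted norm
  set N : EuclideanSpace ℝ (Fin n) → ℝ := fun x => ∑' k : ℕ, ‖(A ^ k) x‖ / β ^ k with hNdef
  have hterm_nonneg : ∀ (x : EuclideanSpace ℝ (Fin n)) (k : ℕ), 0 ≤ ‖(A ^ k) x‖ / β ^ k :=
    fun x k => div_nonneg (norm_nonneg _) (by positivity)
  have hterm_le : ∀ (x : EuclideanSpace ℝ (Fin n)) (k : ℕ),
      ‖(A ^ k) x‖ / β ^ k ≤ c * ‖x‖ * (ρ / β) ^ k := by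
    intro x k
    have h1 : ‖(A ^ k) x‖ ≤ c * ρ ^ k * ‖x‖ :=
      le_trans ((A ^ k).le_opNorm x) (mul_le_mul_of_nonneg_right (hAk k) (norm_nonneg x))
    rw [div_le_iff₀ (by positivity)]
    have hcan : (ρ / β) ^ k * β ^ k = ρ ^ k := by
      rw [div_pow, div_mul_cancel₀ _ (pow_ne_zero k (ne_of_gt hβ0))]
    calc ‖(A ^ k) x‖ ≤ c * ρ ^ k * ‖x‖ := h1
      _ = c * ‖x‖ * ((ρ / β) ^ k * β ^ k) := by rw [hcan]; ring
      _ = c * ‖x‖ * (ρ / β) ^ k * β ^ k := by ring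
  have hsumgeo : ∀ x : EuclideanSpace ℝ (Fin n),
      Summable (fun k : ℕ => c * ‖x‖ * (ρ / β) ^ k) :=
    fun x => (summable_geometric_of_lt_one hq0 hq1).mul_left _
  have hsum : ∀ x : EuclideanSpace ℝ (Fin n), Summable (fun k : ℕ => ‖(A ^ k) x‖ / β ^ k) :=
    fun x => Summable.of_nonneg_of_le (hterm_nonneg x) (hterm_le x) (hsumgeo x)
  have hNnonneg : ∀ x, 0 ≤ N x := fun x => tsum_nonneg (hterm_nonneg x)
  have h_le_N : ∀ x, ‖x‖ ≤ N x := by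
    intro x
    have := Summable.le_tsum (hsum x) 0 (fun i _ => hterm_nonneg x i)
    simpa [hNdef] using this
  have hN_le : ∀ x, N x ≤ M * ‖x‖ := by
    intro x
    have h := Summable.tsum_le_tsum (hterm_le x) (hsum x) (hsumgeo x)
    rw [tsum_mul_left, tsum_geometric_of_lt_one hq0 hq1] at h
    calc N x ≤ c * ‖x‖ * (1 - ρ / β)⁻¹ := h
      _ = M * ‖x‖ := by rw [hMdef, div_eq_mul_inv]; ring
  have hN_add : ∀ x y, N (x + y) ≤ N x + N y := by
    intro x y
    have h := Summable.tsum_le_tsum (f := fun k => ‖(A ^ k) (x + y)‖ / β ^ k)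
      (g := fun k => ‖(A ^ k) x‖ / β ^ k + ‖(A ^ k) y‖ / β ^ k)
      (fun k => by
        show ‖(A ^ k) (x + y)‖ / β ^ k ≤ ‖(A ^ k) x‖ / β ^ k + ‖(A ^ k) y‖ / β ^ k
        rw [← add_div]
        have : ‖(A ^ k) (x + y)‖ ≤ ‖(A ^ k) x‖ + ‖(A ^ k) y‖ := by
          rw [map_add]; exact norm_add_le _ _
        gcongr)
      (hsum _) ((hsum x).add (hsum y))
    rwa [Summable.tsum_add (hsum x) (hsum y)] at h
  have hN_A : ∀ x, N (A x) ≤ β * N x := by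
    intro x
    have h1 : ∀ k : ℕ, ‖(A ^ k) (A x)‖ / β ^ k = β * (‖(A ^ (k + 1)) x‖ / β ^ (k + 1)) := by
      intro k
      rw [pow_succ, ContinuousLinearMap.mul_apply, pow_succ β, div_mul_eq_div_div,
        mul_comm β, div_mul_cancel₀ _ (ne_of_gt hβ0)]
    have htail : (∑' k : ℕ, ‖(A ^ (k + 1)) x‖ / β ^ (k + 1)) ≤ N x := by
      have h2 := Summable.tsum_eq_zero_add (hsum x)
      have h3 : 0 ≤ ‖(A ^ 0) x‖ / β ^ 0 := hterm_nonneg x 0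
      have h4 : N x = ‖(A ^ 0) x‖ / β ^ 0 + ∑' k : ℕ, ‖(A ^ (k + 1)) x‖ / β ^ (k + 1) := h2
      linarith
    calc N (A x) = ∑' k : ℕ, β * (‖(A ^ (k + 1)) x‖ / β ^ (k + 1)) := tsum_congr h1
      _ = β * ∑' k : ℕ, ‖(A ^ (k + 1)) x‖ / β ^ (k + 1) := tsum_mul_left
      _ ≤ β * N x := mul_le_mul_of_nonneg_left htail hβ0.le
  -- derivative estimate near 0
  have hlo : ∀ᶠ y in 𝓝 (0 : EuclideanSpace ℝ (Fin n)), ‖f y - A y‖ ≤ ε * ‖y‖ := by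
    have := (Asymptotics.isLittleO_iff.mp hA.isLittleO) hε0
    simpa [hf0] using this
  rw [Metric.eventually_nhds_iff] at hlo
  obtain ⟨r1, hr1, hest⟩ := hlo
  obtain ⟨r2, hr2, hball⟩ := Metric.isOpen_iff.1 hΩ 0 h0Ω
  set r : ℝ := min r1 r2 with hrdef
  have hr0 : 0 < r := lt_min hr1 hr2
  refine ⟨r / M, div_pos hr0 hM0, M, hM1, α, ⟨hα0, hα1⟩, ?_⟩
  intro x hx k
  have hxM : M * ‖x‖ < r := by
    rw [lt_div_iff₀ hM0] at hx
    linarith [hx]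
  have key : ∀ j : ℕ, N (f^[j] x) ≤ α ^ j * N x := by
    intro j
    induction j with
    | zero => simp
    | succ j ih =>
      have hαj1 : α ^ j ≤ 1 := pow_le_one₀ hα0.le hα1.le
      have hyr : ‖f^[j] x‖ < r := by
        calc ‖f^[j] x‖ ≤ N (f^[j] x) := h_le_N _
          _ ≤ α ^ j * N x := ih
          _ ≤ 1 * N x := mul_le_mul_of_nonneg_right hαj1 (hNnonneg _)
          _ = N x := one_mul _
          _ ≤ M * ‖x‖ := hN_le x
          _ < r := hxM
      rw [Function.iterate_succ_apply']
      set y := f^[j] x with hy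
      have hest' : ‖f y - A y‖ ≤ ε * ‖y‖ := by
        apply hest
        rw [dist_zero_right]
        exact lt_of_lt_of_le hyr (min_le_left _ _)
      calc N (f y) = N (A y + (f y - A y)) := by rw [add_sub_cancel]
        _ ≤ N (A y) + N (f y - A y) := hN_add _ _
        _ ≤ β * N y + M * ‖f y - A y‖ := add_le_add (hN_A y) (hN_le _)
        _ ≤ β * N y + M * (ε * ‖y‖) :=
            add_le_add_right (mul_le_mul_of_nonneg_left hest' hM0.le) _
        _ ≤ β * N y + M * (ε * N y) := by
            have : ‖y‖ ≤ N y := h_le_N y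
            gcongr
        _ = (β + M * ε) * N y := by ring
        _ = α * N y := by rw [hMε]
        _ ≤ α * (α ^ j * N x) := mul_le_mul_of_nonneg_left ih hα0.le
        _ = α ^ (j + 1) * N x := by ring
  have hkr : ‖f^[k] x‖ < r := by
    have hαj1 : α ^ k ≤ 1 := pow_le_one₀ hα0.le hα1.le
    calc ‖f^[k] x‖ ≤ N (f^[k] x) := h_le_N _
      _ ≤ α ^ k * N x := key k
      _ ≤ 1 * N x := mul_le_mul_of_nonneg_right hαj1 (hNnonneg _)
      _ = N x := one_mul _
      _ ≤ M * ‖x‖ := hN_le x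
      _ < r := hxM
  constructor
  · apply hball
    rw [Metric.mem_ball, dist_zero_right]
    exact lt_of_lt_of_le hkr (min_le_right _ _)
  · calc ‖f^[k] x‖ ≤ N (f^[k] x) := h_le_N _
      _ ≤ α ^ k * N x := key k
      _ ≤ α ^ k * (M * ‖x‖) := mul_le_mul_of_nonneg_left (hN_le x) (by positivity)
      _ = M * α ^ k * ‖x‖ := by ring
end

section
/- Under the stated hypotheses, orbits in the domain of attraction decay eventually exponentially: there exist C ≥ 1 and α ∈ (0,1) such that for every x ∈ DA(0) there exists N = N(x) ∈ ℕ with ‖f⁽ᵏ⁾(x)‖ ≤ C·‖f⁽ᴺ⁾(x)‖·α^{k−N} for all k ≥ N. -/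
open Filter Topology

set_option maxHeartbeats 1000000 in
/-- orbits in the domain of attraction decay eventually exponentially. -/
theorem stmt_3 (n : ℕ) (hn : 1 ≤ n)
    (Ω : Set (EuclideanSpace ℝ (Fin n))) (hΩ : IsOpen Ω)
    (h0Ω : (0 : EuclideanSpace ℝ (Fin n)) ∈ Ω)
    (f : EuclideanSpace ℝ (Fin n) → EuclideanSpace ℝ (Fin n))
    (hf : AnalyticOn ℝ f Ω) (hmaps : Set.MapsTo f Ω Ω) (hf0 : f 0 = 0)
    (A : EuclideanSpace ℝ (Fin n) →L[ℝ] EuclideanSpace ℝ (Fin n))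
    (hA : HasFDerivAt f A 0)
    (c ρ : ℝ) (hc : 1 ≤ c) (hρ : ρ ∈ Set.Ioo (0 : ℝ) 1)
    (hAk : ∀ k : ℕ, ‖A ^ k‖ ≤ c * ρ ^ k) :
    ∃ C ≥ (1 : ℝ), ∃ α ∈ Set.Ioo (0 : ℝ) 1,
      ∀ x ∈ {x ∈ Ω | Tendsto (fun k => f^[k] x) atTop (𝓝 0)},
        ∃ N : ℕ, ∀ k ≥ N, ‖f^[k] x‖ ≤ C * ‖f^[N] x‖ * α ^ (k - N) := by
  obtain ⟨hρ0, hρ1⟩ := hρ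
  set α : ℝ := (1 + ρ) / 2 with hαdef
  have hα0 : 0 < α := by positivity
  have hα1 : α < 1 := by rw [hαdef]; linarith
  have hρα : ρ < α := by rw [hαdef]; linarith
  have hc0 : 0 < c := lt_of_lt_of_le one_pos hc
  -- choose m with c * ρ^m < α^m / 2
  obtain ⟨m, hm⟩ := exists_pow_lt_of_lt_one (show (0:ℝ) < 1/(2*c) by positivity)
      (show ρ/α < 1 from (div_lt_one hα0).2 hρα)
  have hmkey : c * ρ ^ m < α ^ m / 2 := by
    have h1 : ρ ^ m = (ρ/α) ^ m * α ^ m := by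
      rw [div_pow, div_mul_cancel₀]
      positivity
    rw [h1]
    calc c * ((ρ/α) ^ m * α ^ m) < c * (1/(2*c) * α ^ m) := by
          apply mul_lt_mul_of_pos_left _ hc0
          exact mul_lt_mul_of_pos_right hm (by positivity)
      _ = α ^ m / 2 := by field_simp
  have hm1 : 1 ≤ m := by
    by_contra h
    push_neg at h
    interval_cases m
    norm_num at hmkey
    linarith
  have hαm0 : 0 < α ^ m := by positivity
  have hαm1 : α ^ m ≤ 1 := pow_le_one₀ hα0.le hα1.le
  -- derivative of the m-th iterate
  have hg : HasFDerivAt f^[m] (A ^ m) 0 := hA.iterate hf0 m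
  have hg0 : f^[m] 0 = 0 := Function.iterate_fixed hf0 m
  -- little-o bound for f^[m]
  have h1 := hg.isLittleO.def (show 0 < α ^ m / 2 by positivity)
  rw [Metric.eventually_nhds_iff] at h1
  obtain ⟨δ, hδ0, hδ⟩ := h1
  -- little-o bound for f
  have h2 := hA.isLittleO.def (show (0:ℝ) < 1 by norm_num)
  rw [Metric.eventually_nhds_iff] at h2
  obtain ⟨δ₁, hδ₁0, hδ₁⟩ := h2
  set M : ℝ := ‖A‖ + 1 with hMdef
  have hM1 : 1 ≤ M := by
    have := norm_nonneg A
    rw [hMdef]; linarith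
  have hM0 : 0 < M := lt_of_lt_of_le one_pos hM1
  have hMm1 : 1 ≤ M ^ m := one_le_pow₀ hM1
  set r : ℝ := min δ δ₁ / 2 with hrdef
  have hr0 : 0 < r := by rw [hrdef]; positivity
  have hrδ : r < δ := by
    rw [hrdef]
    have := min_le_left δ δ₁
    have := lt_min hδ0 hδ₁0
    linarith
  have hrδ₁ : r < δ₁ := by
    rw [hrdef]
    have := min_le_right δ δ₁
    have := lt_min hδ0 hδ₁0
    linarith
  set r' : ℝ := r / M ^ m with hr'def
  have hr'0 : 0 < r' := by rw [hr'def]; positivity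
  have hr'r : r' ≤ r := by
    rw [hr'def, div_le_iff₀ (by positivity)]
    nlinarith
  -- one-step bound
  have hstep : ∀ z : EuclideanSpace ℝ (Fin n), ‖z‖ ≤ r → ‖f z‖ ≤ M * ‖z‖ := by
    intro z hz
    have hz' : dist z 0 < δ₁ := by rw [dist_zero_right]; linarith
    have := hδ₁ hz'
    rw [hf0] at this
    simp only [sub_zero] at this
    have hAz : ‖A z‖ ≤ ‖A‖ * ‖z‖ := A.le_opNorm z
    calc ‖f z‖ = ‖(f z - A z) + A z‖ := by rw [sub_add_cancel]
      _ ≤ ‖f z - A z‖ + ‖A z‖ := norm_add_le _ _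
      _ ≤ 1 * ‖z‖ + ‖A‖ * ‖z‖ := add_le_add this hAz
      _ = M * ‖z‖ := by rw [hMdef]; ring
  -- m-step contraction
  have hcontr : ∀ z : EuclideanSpace ℝ (Fin n), ‖z‖ ≤ r → ‖f^[m] z‖ ≤ α ^ m * ‖z‖ := by
    intro z hz
    have hz' : dist z 0 < δ := by rw [dist_zero_right]; linarith
    have h3 := hδ hz'
    rw [hg0] at h3
    simp only [sub_zero] at h3
    have hAz : ‖(A ^ m) z‖ ≤ (c * ρ ^ m) * ‖z‖ :=
      le_trans ((A ^ m).le_opNorm z) (mul_le_mul_of_nonneg_right (hAk m) (norm_nonneg z))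
    have hnz : 0 ≤ ‖z‖ := norm_nonneg z
    calc ‖f^[m] z‖ = ‖(f^[m] z - (A ^ m) z) + (A ^ m) z‖ := by rw [sub_add_cancel]
      _ ≤ ‖f^[m] z - (A ^ m) z‖ + ‖(A ^ m) z‖ := norm_add_le _ _
      _ ≤ (α ^ m / 2) * ‖z‖ + (c * ρ ^ m) * ‖z‖ := add_le_add h3 hAz
      _ ≤ α ^ m * ‖z‖ := by nlinarith
  -- intermediate-step bound
  have hsmall : ∀ s : ℕ, s ≤ m → ∀ z : EuclideanSpace ℝ (Fin n), ‖z‖ ≤ r' →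
      ‖f^[s] z‖ ≤ M ^ s * ‖z‖ := by
    intro s
    induction s with
    | zero => intro _ z _; simp
    | succ s ih =>
      intro hsm z hz
      have hs' : s ≤ m := Nat.le_of_succ_le hsm
      have ihz := ih hs' z hz
      have hfz : ‖f^[s] z‖ ≤ r := by
        have h4 : M ^ s ≤ M ^ m := pow_le_pow_right₀ hM1 hs'
        have h5 : M ^ s * ‖z‖ ≤ M ^ m * r' := by
          apply mul_le_mul h4 hz (norm_nonneg z) (by positivity)
        have h6 : M ^ m * r' = r := by
          rw [hr'def]; field_simp
        linarith
      have := hstep (f^[s] z) hfz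
      rw [Function.iterate_succ_apply']
      calc ‖f (f^[s] z)‖ ≤ M * ‖f^[s] z‖ := this
        _ ≤ M * (M ^ s * ‖z‖) := by
            apply mul_le_mul_of_nonneg_left ihz hM0.le
        _ = M ^ (s + 1) * ‖z‖ := by ring
  -- main multi-block bound
  have hmain : ∀ q : ℕ, ∀ z : EuclideanSpace ℝ (Fin n), ‖z‖ ≤ r' → ∀ s ≤ m,
      ‖f^[q * m + s] z‖ ≤ M ^ s * α ^ (q * m) * ‖z‖ := by
    intro q
    induction q with
    | zero =>
      intro z hz s hs
      simpa using hsmall s hs z hz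
    | succ q ih =>
      intro z hz s hs
      have hfz1 : ‖f^[m] z‖ ≤ α ^ m * ‖z‖ := hcontr z (le_trans hz hr'r)
      have hfz2 : ‖f^[m] z‖ ≤ r' := by
        have : α ^ m * ‖z‖ ≤ 1 * ‖z‖ :=
          mul_le_mul_of_nonneg_right hαm1 (norm_nonneg z)
        linarith [hz]
      have key : f^[(q + 1) * m + s] z = f^[q * m + s] (f^[m] z) := by
        rw [show (q + 1) * m + s = (q * m + s) + m by ring, Function.iterate_add_apply]
      rw [key]
      calc ‖f^[q * m + s] (f^[m] z)‖ ≤ M ^ s * α ^ (q * m) * ‖f^[m] z‖ := ih (f^[m] z) hfz2 s hs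
        _ ≤ M ^ s * α ^ (q * m) * (α ^ m * ‖z‖) := by
            apply mul_le_mul_of_nonneg_left hfz1 (by positivity)
        _ = M ^ s * α ^ ((q + 1) * m) * ‖z‖ := by
            rw [show (q + 1) * m = q * m + m by ring, pow_add]; ring
  -- the constant
  set C : ℝ := (M / α) ^ m with hCdef
  have hMα : 1 ≤ M / α := by
    rw [one_le_div hα0]
    linarith
  have hC1 : 1 ≤ C := one_le_pow₀ hMα
  -- uniform exponential bound on the small ball
  have hfinal : ∀ z : EuclideanSpace ℝ (Fin n), ‖z‖ ≤ r' → ∀ j : ℕ,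
      ‖f^[j] z‖ ≤ C * α ^ j * ‖z‖ := by
    intro z hz j
    set q := j / m with hq
    set s := j % m with hs
    have hsm : s < m := Nat.mod_lt j (by omega)
    have hj : q * m + s = j := by
      rw [hq, hs, mul_comm]; exact Nat.div_add_mod j m
    have hb := hmain q z hz s hsm.le
    rw [hj] at hb
    refine le_trans hb ?_
    apply mul_le_mul_of_nonneg_right _ (norm_nonneg z)
    have hMs : M ^ s = (M / α) ^ s * α ^ s := by
      rw [div_pow, div_mul_cancel₀]
      positivity
    have hds : (M / α) ^ s ≤ (M / α) ^ m := pow_le_pow_right₀ hMα hsm.le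
    calc M ^ s * α ^ (q * m) = (M / α) ^ s * (α ^ s * α ^ (q * m)) := by rw [hMs]; ring
      _ ≤ (M / α) ^ m * (α ^ s * α ^ (q * m)) := by
          apply mul_le_mul_of_nonneg_right hds (by positivity)
      _ = C * α ^ j := by
          rw [hCdef, ← hj, pow_add]; ring
  -- conclude
  refine ⟨C, hC1, α, ⟨hα0, hα1⟩, ?_⟩
  intro x hx
  obtain ⟨hxΩ, hxt⟩ := hx
  have hev : ∀ᶠ k in atTop, f^[k] x ∈ Metric.ball (0 : EuclideanSpace ℝ (Fin n)) r' :=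
    hxt (Metric.ball_mem_nhds 0 hr'0)
  obtain ⟨N, hN⟩ := eventually_atTop.1 hev
  refine ⟨N, fun k hk => ?_⟩
  have hNx : ‖f^[N] x‖ ≤ r' := by
    have := hN N le_rfl
    rw [Metric.mem_ball, dist_zero_right] at this
    linarith
  have hksplit : f^[k] x = f^[k - N] (f^[N] x) := by
    rw [← Function.iterate_add_apply, Nat.sub_add_cancel hk]
  rw [hksplit]
  calc ‖f^[k - N] (f^[N] x)‖ ≤ C * α ^ (k - N) * ‖f^[N] x‖ := hfinal _ hNx (k - N)
    _ = C * ‖f^[N] x‖ * α ^ (k - N) := by ring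
end

section
/- Under the stated hypotheses, for every x ∈ Ω the following equivalence holds: x ∈ DA(0) if and only if the series ∑_{k=0}^∞ ‖f⁽ᵏ⁾(x)‖² converges (i.e., is summable). -/
open Filter Topology

lemma aux_deriv_bound {E : Type*} [NormedAddCommGroup E] [NormedSpace ℝ E]
    (φ : E → E) (B : E →L[ℝ] E) (hφ : HasFDerivAt φ B 0) (h0 : φ 0 = 0)
    {b ε : ℝ} (hB : ‖B‖ ≤ b) (hε : 0 < ε) :
    ∀ᶠ z in 𝓝 (0 : E), ‖φ z‖ ≤ (b + ε) * ‖z‖ := by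
  have h := hφ.isLittleO
  simp only [h0, sub_zero] at h
  filter_upwards [h.def hε] with z hz
  calc ‖φ z‖ ≤ ‖φ z - B z‖ + ‖B z‖ := by
        have := norm_add_le (φ z - B z) (B z); simpa using this
    _ ≤ ε * ‖z‖ + ‖B‖ * ‖z‖ := add_le_add hz (B.le_opNorm z)
    _ ≤ (b + ε) * ‖z‖ := by nlinarith [norm_nonneg z, norm_nonneg (B : E →L[ℝ] E)]

lemma aux_summable_div (m : ℕ) (hm : 1 ≤ m) :
    Summable (fun k : ℕ => ((1:ℝ)/4) ^ (k / m)) := by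
  set s : ℝ := ((1:ℝ)/4) ^ ((1:ℝ)/m) with hs
  have hs0 : 0 ≤ s := Real.rpow_nonneg (by norm_num) _
  have hs1 : s < 1 := Real.rpow_lt_one (by norm_num) (by norm_num)
    (by positivity)
  have hgeo : Summable (fun k : ℕ => 4 * s ^ k) :=
    (summable_geometric_of_lt_one hs0 hs1).mul_left 4
  refine Summable.of_nonneg_of_le (fun k => by positivity) (fun k => ?_) hgeo
  have hmR : (0:ℝ) < m := by exact_mod_cast hm
  have hdiv : (k:ℝ)/m - 1 ≤ ((k / m : ℕ) : ℝ) := by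
    have h1 : k < m * (k / m) + m := by
      have := Nat.div_add_mod k m
      have := Nat.mod_lt k (show 0 < m from hm)
      omega
    have h1R : (k:ℝ) < m * ((k/m : ℕ):ℝ) + m := by exact_mod_cast h1
    rw [div_sub_one (ne_of_gt hmR), div_le_iff₀ hmR]
    nlinarith
  calc ((1:ℝ)/4) ^ (k / m)
      = ((1:ℝ)/4) ^ (((k / m : ℕ) : ℝ)) := by rw [Real.rpow_natCast]
    _ ≤ ((1:ℝ)/4) ^ ((k:ℝ)/m - 1) :=
        Real.rpow_le_rpow_of_exponent_ge (by norm_num) (by norm_num) hdiv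
    _ = 4 * s ^ k := by
        rw [Real.rpow_sub (by norm_num), Real.rpow_one]
        rw [show (k:ℝ)/m = (1:ℝ)/m * (k:ℝ) by ring,
          Real.rpow_mul (by norm_num), Real.rpow_natCast, ← hs]
        ring


/-- for every `x ∈ Ω`, `x ∈ DA(0)` iff `∑ ‖f⁽ᵏ⁾(x)‖²` is summable. -/
theorem stmt_4 (n : ℕ) (hn : 1 ≤ n)
    (Ω : Set (EuclideanSpace ℝ (Fin n))) (hΩ : IsOpen Ω)
    (h0Ω : (0 : EuclideanSpace ℝ (Fin n)) ∈ Ω)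
    (f : EuclideanSpace ℝ (Fin n) → EuclideanSpace ℝ (Fin n))
    (hf : AnalyticOn ℝ f Ω) (hmaps : Set.MapsTo f Ω Ω) (hf0 : f 0 = 0)
    (A : EuclideanSpace ℝ (Fin n) →L[ℝ] EuclideanSpace ℝ (Fin n))
    (hA : HasFDerivAt f A 0)
    (c ρ : ℝ) (hc : 1 ≤ c) (hρ : ρ ∈ Set.Ioo (0 : ℝ) 1)
    (hAk : ∀ k : ℕ, ‖A ^ k‖ ≤ c * ρ ^ k) :
    ∀ x ∈ Ω, (Tendsto (fun k => f^[k] x) atTop (𝓝 0) ↔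
      Summable (fun k : ℕ => ‖f^[k] x‖ ^ 2)) := by
  obtain ⟨hρ0, hρ1⟩ := hρ
  intro x hx
  constructor
  · intro hT
    -- fixed points of iterates
    have hfix : ∀ k : ℕ, f^[k] 0 = 0 := fun k => Function.iterate_fixed hf0 k
    -- derivatives of iterates at 0
    have hD : ∀ k : ℕ, HasFDerivAt f^[k] (A ^ k) 0 := by
      intro k
      induction k with
      | zero => exact hasFDerivAt_id (0 : EuclideanSpace ℝ (Fin n))
      | succ k ih =>
        have h1 : HasFDerivAt f A (f^[k] 0) := by rw [hfix k]; exact hA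
        have h2 : HasFDerivAt (f ∘ f^[k]) (A.comp (A ^ k)) 0 := h1.comp 0 ih
        rw [Function.iterate_succ']
        convert h2 using 1
        rw [pow_succ']
        rfl
    -- choose m with c * ρ^m < 1/4
    obtain ⟨m, hm⟩ : ∃ m : ℕ, c * ρ ^ m < 1/4 := by
      have h := tendsto_pow_atTop_nhds_zero_of_lt_one hρ0.le hρ1
      have h2 : Tendsto (fun m : ℕ => c * ρ ^ m) atTop (𝓝 (c * 0)) := h.const_mul c
      rw [mul_zero] at h2
      exact ((h2.eventually (eventually_lt_nhds (by norm_num : (0:ℝ) < 1/4))).exists)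
    have hm1 : 1 ≤ m := by
      by_contra h
      interval_cases m
      simp at hm; linarith
    -- eventual bounds near 0
    have hgev : ∀ᶠ z in 𝓝 (0 : EuclideanSpace ℝ (Fin n)),
        ‖f^[m] z‖ ≤ (1/4 + 1/4) * ‖z‖ :=
      aux_deriv_bound _ _ (hD m) (hfix m) ((hAk m).trans hm.le) (by norm_num)
    have hiev : ∀ᶠ z in 𝓝 (0 : EuclideanSpace ℝ (Fin n)),
        ∀ i ∈ Finset.range m, ‖f^[i] z‖ ≤ (c + 1) * ‖z‖ := by
      rw [Filter.eventually_all_finset]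
      intro i _
      have hAi : ‖A ^ i‖ ≤ c := (hAk i).trans (by
        nlinarith [pow_le_one₀ hρ0.le hρ1.le (n := i), pow_nonneg hρ0.le i])
      exact aux_deriv_bound _ _ (hD i) (hfix i) hAi one_pos
    obtain ⟨r, hr0, hr⟩ := Metric.eventually_nhds_iff_ball.1 (hiev.and hgev)
    simp only [Metric.mem_ball, dist_zero_right] at hr
    -- find N with ‖f^[N] x‖ < r
    obtain ⟨N, hN⟩ : ∃ N : ℕ, ‖f^[N] x‖ < r := by
      have := (hT.eventually (Metric.ball_mem_nhds 0 hr0)).exists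
      simpa [Metric.mem_ball, dist_zero_right] using this
    set y := f^[N] x with hy
    -- geometric decay of (f^[m])-iterates of y
    have hgj : ∀ j : ℕ, ‖(f^[m])^[j] y‖ ≤ (1/2:ℝ)^j * ‖y‖ ∧ ‖(f^[m])^[j] y‖ < r := by
      intro j
      induction j with
      | zero => simp [hN]
      | succ j ih =>
        obtain ⟨ih1, ih2⟩ := ih
        rw [Function.iterate_succ_apply']
        have hb := (hr _ ih2).2
        constructor
        · calc ‖f^[m] ((f^[m])^[j] y)‖ ≤ (1/4 + 1/4) * ‖(f^[m])^[j] y‖ := hb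
            _ ≤ (1/2) * ((1/2:ℝ)^j * ‖y‖) := by nlinarith
            _ = (1/2:ℝ)^(j+1) * ‖y‖ := by ring
        · calc ‖f^[m] ((f^[m])^[j] y)‖ ≤ (1/4 + 1/4) * ‖(f^[m])^[j] y‖ := hb
            _ ≤ ‖(f^[m])^[j] y‖ := by nlinarith [norm_nonneg ((f^[m])^[j] y)]
            _ < r := ih2
    -- key bound
    have hkey : ∀ k : ℕ, ‖f^[k + N] x‖ ≤ (c + 1) * ((1/2:ℝ)^(k/m) * ‖y‖) := by
      intro k
      have hdm : m * (k / m) + k % m = k := Nat.div_add_mod k m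
      have hsplit : f^[k + N] x = f^[k % m] ((f^[m])^[k / m] y) := by
        conv_lhs => rw [show k + N = k % m + (m * (k / m) + N) by omega]
        rw [Function.iterate_add_apply, Function.iterate_add_apply,
          Function.iterate_mul]
      rw [hsplit]
      obtain ⟨h1, h2⟩ := hgj (k / m)
      have h3 := (hr _ h2).1 (k % m) (Finset.mem_range.2 (Nat.mod_lt k hm1))
      calc ‖f^[k % m] ((f^[m])^[k/m] y)‖ ≤ (c + 1) * ‖(f^[m])^[k/m] y‖ := h3
        _ ≤ (c + 1) * ((1/2:ℝ)^(k/m) * ‖y‖) := by nlinarith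
    -- conclude summability
    rw [← summable_nat_add_iff N]
    have hsum : Summable (fun k : ℕ => ((c+1) * ‖y‖)^2 * ((1:ℝ)/4) ^ (k / m)) :=
      (aux_summable_div m hm1).mul_left _
    refine Summable.of_nonneg_of_le (fun k => by positivity) (fun k => ?_) hsum
    have hb := hkey k
    have h4 : ((1/2:ℝ)^(k/m))^2 = ((1:ℝ)/4)^(k/m) := by
      rw [← pow_mul, mul_comm (k/m) 2, pow_mul]; norm_num
    calc ‖f^[k + N] x‖ ^ 2 ≤ ((c + 1) * ((1/2:ℝ)^(k/m) * ‖y‖)) ^ 2 :=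
          pow_le_pow_left₀ (norm_nonneg _) hb 2
      _ = ((c+1) * ‖y‖)^2 * ((1/2:ℝ)^(k/m))^2 := by ring
      _ = ((c+1) * ‖y‖)^2 * ((1:ℝ)/4) ^ (k / m) := by rw [h4]
  · intro hS
    have h1 : Tendsto (fun k => ‖f^[k] x‖ ^ 2) atTop (𝓝 0) := hS.tendsto_atTop_zero
    have h2 : Tendsto (fun k => ‖f^[k] x‖) atTop (𝓝 0) := by
      have := (Real.continuous_sqrt.tendsto 0).comp h1
      simpa [Function.comp_def, Real.sqrt_sq (norm_nonneg _)] using this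
    exact tendsto_zero_iff_norm_tendsto_zero.2 h2
end

section
/- Under the stated hypotheses, the function V defined on DA(0) by V(x) = ∑_{k=0}^∞ ‖f⁽ᵏ⁾(x)‖² is well defined (the series converges for every x ∈ DA(0)) and satisfies: V(0) = 0; V(f(x)) − V(x) = −‖x‖² for every x ∈ DA(0); and V(x) > 0 for every x ∈ DA(0) with x ≠ 0. -/
open Filter Topology

/-- `V(x) = ∑' k, ‖f⁽ᵏ⁾(x)‖²` is well defined on `DA(0)`, vanishes at `0`,
satisfies `V(f(x)) − V(x) = −‖x‖²` on `DA(0)`, and is positive on `DA(0) \ {0}`. -/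
theorem stmt_5 (n : ℕ) (hn : 1 ≤ n)
    (Ω : Set (EuclideanSpace ℝ (Fin n))) (hΩ : IsOpen Ω)
    (h0Ω : (0 : EuclideanSpace ℝ (Fin n)) ∈ Ω)
    (f : EuclideanSpace ℝ (Fin n) → EuclideanSpace ℝ (Fin n))
    (hf : AnalyticOn ℝ f Ω) (hmaps : Set.MapsTo f Ω Ω) (hf0 : f 0 = 0)
    (A : EuclideanSpace ℝ (Fin n) →L[ℝ] EuclideanSpace ℝ (Fin n))
    (hA : HasFDerivAt f A 0)
    (c ρ : ℝ) (hc : 1 ≤ c) (hρ : ρ ∈ Set.Ioo (0 : ℝ) 1)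
    (hAk : ∀ k : ℕ, ‖A ^ k‖ ≤ c * ρ ^ k) :
    (∀ x ∈ {x ∈ Ω | Tendsto (fun k => f^[k] x) atTop (𝓝 0)},
        Summable (fun k : ℕ => ‖f^[k] x‖ ^ 2)) ∧
    (∑' k : ℕ, ‖f^[k] (0 : EuclideanSpace ℝ (Fin n))‖ ^ 2) = 0 ∧
    (∀ x ∈ {x ∈ Ω | Tendsto (fun k => f^[k] x) atTop (𝓝 0)},
        (∑' k : ℕ, ‖f^[k] (f x)‖ ^ 2) - (∑' k : ℕ, ‖f^[k] x‖ ^ 2) = -‖x‖ ^ 2) ∧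
    (∀ x ∈ {x ∈ Ω | Tendsto (fun k => f^[k] x) atTop (𝓝 0)}, x ≠ 0 →
        0 < ∑' k : ℕ, ‖f^[k] x‖ ^ 2) := by

  classical
  -- iterates fix 0
  have hf0k : ∀ k : ℕ, f^[k] 0 = 0 := fun k => Function.iterate_fixed hf0 k
  -- derivative of iterates at 0
  have hiter : ∀ m : ℕ, HasFDerivAt (f^[m]) (A ^ m) 0 := by
    intro m
    induction m with
    | zero => rw [Function.iterate_zero, pow_zero]; exact hasFDerivAt_id (0 : EuclideanSpace ℝ (Fin n))
    | succ m ih =>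
      have h1 : HasFDerivAt f A (f^[m] 0) := by rw [hf0k]; exact hA
      have h2 := h1.comp 0 ih
      rw [Function.iterate_succ']
      rw [pow_succ']
      exact h2
  -- choose m with c * ρ ^ m < 1/2
  obtain ⟨m, hm⟩ : ∃ m : ℕ, c * ρ ^ m < 1/2 := by
    obtain ⟨m, hm⟩ := exists_pow_lt_of_lt_one (show (0:ℝ) < 1/(2*c) by positivity) hρ.2
    refine ⟨m, ?_⟩
    have hc0 : (0:ℝ) < c := lt_of_lt_of_le one_pos hc
    calc c * ρ ^ m < c * (1/(2*c)) := by exact mul_lt_mul_of_pos_left hm hc0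
    _ = 1/2 := by field_simp
  have hm0 : m ≠ 0 := by
    intro h
    rw [h] at hm
    simp at hm
    linarith
  have hmpos : 0 < m := Nat.pos_of_ne_zero hm0
  -- little-o estimate for f^[m] near 0
  have hlo := (hasFDerivAt_iff_isLittleO_nhds_zero.mp (hiter m))
  rw [Asymptotics.isLittleO_iff] at hlo
  obtain ⟨δ₀, hδ₀pos, hδ₀⟩ := Metric.eventually_nhds_iff.mp (hlo (show (0:ℝ) < 1/4 by norm_num))
  have hcontr0 : ∀ y : EuclideanSpace ℝ (Fin n), ‖y‖ < δ₀ → ‖f^[m] y‖ ≤ 3/4 * ‖y‖ := by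
    intro y hy
    have h1 := hδ₀ (show dist y 0 < δ₀ by rwa [dist_zero_right])
    simp only [zero_add, hf0k, sub_zero] at h1
    have h2 : ‖(A ^ m) y‖ ≤ c * ρ ^ m * ‖y‖ :=
      le_trans ((A ^ m).le_opNorm y) (mul_le_mul_of_nonneg_right (hAk m) (norm_nonneg y))
    have h3 : ‖f^[m] y‖ ≤ ‖f^[m] y - (A ^ m) y‖ + ‖(A ^ m) y‖ := by
      simpa using norm_add_le (f^[m] y - (A ^ m) y) ((A ^ m) y)
    have h4 : c * ρ ^ m * ‖y‖ ≤ 1/2 * ‖y‖ :=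
      mul_le_mul_of_nonneg_right hm.le (norm_nonneg y)
    nlinarith [norm_nonneg y]
  -- Lipschitz-type bound for f near 0
  have hlo1 := (hasFDerivAt_iff_isLittleO_nhds_zero.mp hA)
  rw [Asymptotics.isLittleO_iff] at hlo1
  obtain ⟨δ₁, hδ₁pos, hδ₁⟩ := Metric.eventually_nhds_iff.mp (hlo1 (show (0:ℝ) < 1 by norm_num))
  set L : ℝ := ‖A‖ + 1 with hLdef
  have hL1 : (1:ℝ) ≤ L := by rw [hLdef]; linarith [norm_nonneg A]
  have hL0 : (0:ℝ) < L := lt_of_lt_of_le one_pos hL1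
  have hLip : ∀ y : EuclideanSpace ℝ (Fin n), ‖y‖ < δ₁ → ‖f y‖ ≤ L * ‖y‖ := by
    intro y hy
    have h1 := hδ₁ (show dist y 0 < δ₁ by rwa [dist_zero_right])
    simp only [zero_add, hf0, sub_zero, one_mul] at h1
    have h2 : ‖A y‖ ≤ ‖A‖ * ‖y‖ := A.le_opNorm y
    have h3 : ‖f y‖ ≤ ‖f y - A y‖ + ‖A y‖ := by
      simpa using norm_add_le (f y - A y) (A y)
    rw [hLdef]
    nlinarith [norm_nonneg y]
  -- the radius
  set δ : ℝ := min δ₀ δ₁ / 2 with hδdef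
  have hδpos : 0 < δ := by positivity
  have hδ0 : δ < δ₀ := by
    have := min_le_left δ₀ δ₁; simp only [hδdef]; linarith
  have hδ1 : δ < δ₁ := by
    have := min_le_right δ₀ δ₁; simp only [hδdef]; linarith
  set δ' : ℝ := δ / L ^ m with hδ'def
  have hLm1 : (1:ℝ) ≤ L ^ m := one_le_pow₀ hL1
  have hδ'pos : 0 < δ' := by positivity
  have hδ'le : δ' ≤ δ := by
    rw [hδ'def]
    calc δ / L ^ m ≤ δ / 1 := by
          apply div_le_div_of_nonneg_left hδpos.le one_pos hLm1
    _ = δ := by ring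
  -- iterate bound up to m steps
  have hLpow : ∀ j ≤ m, ∀ y : EuclideanSpace ℝ (Fin n), ‖y‖ ≤ δ' → ‖f^[j] y‖ ≤ L ^ j * ‖y‖ := by
    intro j hj
    induction j with
    | zero => intro y hy; simp
    | succ j ih =>
      intro y hy
      have hj' : j ≤ m := Nat.le_of_succ_le hj
      have h1 : ‖f^[j] y‖ ≤ L ^ j * ‖y‖ := ih hj' y hy
      have h2 : L ^ j * ‖y‖ ≤ L ^ m * δ' := by
        apply mul_le_mul (pow_le_pow_right₀ hL1 hj') hy (norm_nonneg y) (by positivity)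
      have h3 : L ^ m * δ' = δ := by
        rw [hδ'def]; field_simp
      have h4 : ‖f^[j] y‖ < δ₁ := by
        calc ‖f^[j] y‖ ≤ δ := by rw [← h3]; linarith
        _ < δ₁ := hδ1
      rw [Function.iterate_succ_apply']
      calc ‖f (f^[j] y)‖ ≤ L * ‖f^[j] y‖ := hLip _ h4
      _ ≤ L * (L ^ j * ‖y‖) := by
          exact mul_le_mul_of_nonneg_left h1 hL0.le
      _ = L ^ (j + 1) * ‖y‖ := by ring
  -- m-step contraction stays in the ball
  have hcontr : ∀ y : EuclideanSpace ℝ (Fin n), ‖y‖ ≤ δ' →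
      ‖f^[m] y‖ ≤ 3/4 * ‖y‖ ∧ ‖f^[m] y‖ ≤ δ' := by
    intro y hy
    have hy0 : ‖y‖ < δ₀ := lt_of_le_of_lt (hy.trans hδ'le) hδ0
    have h1 := hcontr0 y hy0
    exact ⟨h1, by nlinarith [norm_nonneg y]⟩
  -- multi-block contraction
  have hq : ∀ q : ℕ, ∀ y : EuclideanSpace ℝ (Fin n), ‖y‖ ≤ δ' →
      ‖f^[m*q] y‖ ≤ (3/4)^q * ‖y‖ ∧ ‖f^[m*q] y‖ ≤ δ' := by
    intro q
    induction q with
    | zero => intro y hy; simpa using hy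
    | succ q ih =>
      intro y hy
      obtain ⟨h1, h2⟩ := ih y hy
      have heq : m * (q + 1) = m + m * q := by ring
      have hfe : f^[m * (q+1)] y = f^[m] (f^[m*q] y) := by
        rw [heq, Function.iterate_add_apply]
      obtain ⟨h3, h4⟩ := hcontr _ h2
      constructor
      · rw [hfe]
        calc ‖f^[m] (f^[m*q] y)‖ ≤ 3/4 * ‖f^[m*q] y‖ := h3
        _ ≤ 3/4 * ((3/4)^q * ‖y‖) := by nlinarith
        _ = (3/4)^(q+1) * ‖y‖ := by ring
      · rw [hfe]; exact h4
  -- general iterate bound on the small ball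
  have hk : ∀ y : EuclideanSpace ℝ (Fin n), ‖y‖ ≤ δ' → ∀ k : ℕ,
      ‖f^[k] y‖ ≤ L ^ m * ((3/4)^(k/m) * δ') := by
    intro y hy k
    have hkeq : k = k % m + m * (k / m) := (Nat.mod_add_div k m).symm
    have hfe : f^[k] y = f^[k % m] (f^[m * (k/m)] y) := by
      conv_lhs => rw [hkeq]
      rw [Function.iterate_add_apply]
    obtain ⟨h1, h2⟩ := hq (k/m) y hy
    have hmod : k % m ≤ m := (Nat.mod_lt k hmpos).le
    have h3 := hLpow (k % m) hmod _ h2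
    rw [hfe]
    calc ‖f^[k % m] (f^[m * (k/m)] y)‖ ≤ L ^ (k % m) * ‖f^[m*(k/m)] y‖ := h3
    _ ≤ L ^ m * ((3/4)^(k/m) * δ') := by
        have hLle : L ^ (k % m) ≤ L ^ m := pow_le_pow_right₀ hL1 hmod
        have h4 : ‖f^[m*(k/m)] y‖ ≤ (3/4)^(k/m) * δ' := by
          calc ‖f^[m*(k/m)] y‖ ≤ (3/4)^(k/m) * ‖y‖ := h1
          _ ≤ (3/4)^(k/m) * δ' := by
              apply mul_le_mul_of_nonneg_left hy (by positivity)
        apply mul_le_mul hLle h4 (norm_nonneg _) (by positivity)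
  -- geometric comparison via rpow
  set s : ℝ := (3/4 : ℝ) ^ ((m : ℝ))⁻¹ with hsdef
  have hs0 : 0 < s := Real.rpow_pos_of_pos (by norm_num) _
  have hs1 : s < 1 := by
    apply Real.rpow_lt_one (by norm_num) (by norm_num)
    positivity
  have hsm : s ^ m = 3/4 := Real.rpow_inv_natCast_pow (by norm_num) hm0
  have hgeom : ∀ k : ℕ, ((3:ℝ)/4) ^ (k / m) ≤ s ^ k / s ^ m := by
    intro k
    rw [← hsm, ← pow_mul]
    rw [le_div_iff₀ (by positivity)]
    rw [← pow_add]
    apply pow_le_pow_of_le_one hs0.le hs1.le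
    have := Nat.mod_add_div k m
    have := Nat.mod_lt k hmpos
    omega
  set C : ℝ := L ^ m * δ' / s ^ m with hCdef
  have hCpos : 0 < C := by positivity
  -- main summability lemma
  have main : ∀ x ∈ {x ∈ Ω | Tendsto (fun k => f^[k] x) atTop (𝓝 0)},
      Summable (fun k : ℕ => ‖f^[k] x‖ ^ 2) := by
    rintro x ⟨hxΩ, hx⟩
    obtain ⟨N, hN⟩ := (Metric.tendsto_atTop.mp hx) δ' hδ'pos
    have hyN : ‖f^[N] x‖ ≤ δ' := by
      have := hN N le_rfl
      rw [dist_zero_right] at this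
      exact this.le
    have hbound : ∀ k : ℕ, ‖f^[k + N] x‖ ^ 2 ≤ C ^ 2 * (s ^ 2) ^ k := by
      intro k
      have h1 : f^[k + N] x = f^[k] (f^[N] x) := Function.iterate_add_apply f k N x
      have h2 : ‖f^[k + N] x‖ ≤ C * s ^ k := by
        rw [h1]
        calc ‖f^[k] (f^[N] x)‖ ≤ L ^ m * ((3/4)^(k/m) * δ') := hk _ hyN k
        _ ≤ L ^ m * ((s ^ k / s ^ m) * δ') := by
            apply mul_le_mul_of_nonneg_left _ (by positivity)
            apply mul_le_mul_of_nonneg_right (hgeom k) hδ'pos.le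
        _ = C * s ^ k := by rw [hCdef]; field_simp
      calc ‖f^[k + N] x‖ ^ 2 ≤ (C * s ^ k) ^ 2 :=
            pow_le_pow_left₀ (norm_nonneg _) h2 2
      _ = C ^ 2 * (s ^ 2) ^ k := by rw [mul_pow, ← pow_mul, ← pow_mul, Nat.mul_comm]
    have hs2 : Summable (fun k : ℕ => (s ^ 2) ^ k) :=
      summable_geometric_of_lt_one (pow_nonneg hs0.le 2) (pow_lt_one₀ hs0.le hs1 (by norm_num))
    have hgs : Summable (fun k : ℕ => C ^ 2 * (s ^ 2) ^ k) := hs2.mul_left _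
    have hsum' : Summable (fun k : ℕ => ‖f^[k + N] x‖ ^ 2) :=
      Summable.of_nonneg_of_le (fun k => by positivity) hbound hgs
    exact (summable_nat_add_iff N).mp hsum'
  refine ⟨main, ?_, ?_, ?_⟩
  · simp [hf0k]
  · rintro x hx
    have hsum := main x hx
    have hshift : ∀ k : ℕ, f^[k] (f x) = f^[k + 1] x := by
      intro k
      rw [Function.iterate_succ_apply]
    have h1 : (∑' k : ℕ, ‖f^[k] (f x)‖ ^ 2) = ∑' k : ℕ, ‖f^[k + 1] x‖ ^ 2 := by
      exact tsum_congr fun k => by rw [hshift]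
    have h2 := Summable.tsum_eq_zero_add hsum
    rw [h1, h2]
    simp
  · rintro x hx hx0
    have hsum := main x hx
    apply Summable.tsum_pos hsum (fun k => by positivity) 0
    simp only [Function.iterate_zero, id_eq]
    have : 0 < ‖x‖ := norm_pos_iff.mpr hx0
    positivity
end

section
/- Under the stated hypotheses, the function V(x) = ∑_{k=0}^∞ ‖f⁽ᵏ⁾(x)‖² is the unique solution of the functional equation on DA(0) in the following sense: if W : E → ℝ is continuous at 0, W(0) = 0, and W(f(x)) − W(x) = −‖x‖² for every x ∈ DA(0), then W(x) = V(x) for every x ∈ DA(0). -/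
open Filter Topology

/-- `V` is the unique solution of the functional equation on `DA(0)`. -/
theorem stmt_7 (n : ℕ) (hn : 1 ≤ n)
    (Ω : Set (EuclideanSpace ℝ (Fin n))) (hΩ : IsOpen Ω)
    (h0Ω : (0 : EuclideanSpace ℝ (Fin n)) ∈ Ω)
    (f : EuclideanSpace ℝ (Fin n) → EuclideanSpace ℝ (Fin n))
    (hf : AnalyticOn ℝ f Ω) (hmaps : Set.MapsTo f Ω Ω) (hf0 : f 0 = 0)
    (A : EuclideanSpace ℝ (Fin n) →L[ℝ] EuclideanSpace ℝ (Fin n))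
    (hA : HasFDerivAt f A 0)
    (c ρ : ℝ) (hc : 1 ≤ c) (hρ : ρ ∈ Set.Ioo (0 : ℝ) 1)
    (hAk : ∀ k : ℕ, ‖A ^ k‖ ≤ c * ρ ^ k)
    (W : EuclideanSpace ℝ (Fin n) → ℝ) (hWcont : ContinuousAt W 0) (hW0 : W 0 = 0)
    (hWeq : ∀ x ∈ {x ∈ Ω | Tendsto (fun k => f^[k] x) atTop (𝓝 0)},
        W (f x) - W x = -‖x‖ ^ 2) :
    ∀ x ∈ {x ∈ Ω | Tendsto (fun k => f^[k] x) atTop (𝓝 0)},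
      W x = ∑' k : ℕ, ‖f^[k] x‖ ^ 2 := by
  set S := {x ∈ Ω | Tendsto (fun k => f^[k] x) atTop (𝓝 0)} with hS
  have hinv : ∀ x ∈ S, f x ∈ S := by
    intro x hx
    refine ⟨hmaps hx.1, ?_⟩
    have := hx.2.comp (tendsto_add_atTop_nat 1)
    simpa [Function.comp_def, Function.iterate_succ_apply] using this
  intro x hx
  have hiter : ∀ m : ℕ, f^[m] x ∈ S := by
    intro m
    induction m with
    | zero => simpa using hx
    | succ m ih => rw [Function.iterate_succ_apply']; exact hinv _ ih
  have htel : ∀ m : ℕ, ∑ k ∈ Finset.range m, ‖f^[k] x‖ ^ 2 = W x - W (f^[m] x) := by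
    intro m
    have : ∑ k ∈ Finset.range m, (W (f^[k+1] x) - W (f^[k] x)) = W (f^[m] x) - W x :=
      by simpa using Finset.sum_range_sub (fun k => W (f^[k] x)) m
    have h2 : ∑ k ∈ Finset.range m, (W (f^[k+1] x) - W (f^[k] x))
        = ∑ k ∈ Finset.range m, -(‖f^[k] x‖ ^ 2) := by
      refine Finset.sum_congr rfl fun k _ => ?_
      rw [Function.iterate_succ_apply']
      exact hWeq _ (hiter k)
    rw [h2, Finset.sum_neg_distrib] at this
    linarith
  have hWlim : Tendsto (fun m => W (f^[m] x)) atTop (𝓝 0) := by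
    have := (hWcont.tendsto).comp hx.2
    simpa [hW0, Function.comp_def] using this
  have hlim : Tendsto (fun m => ∑ k ∈ Finset.range m, ‖f^[k] x‖ ^ 2) atTop (𝓝 (W x)) := by
    simp only [htel]
    simpa using tendsto_const_nhds.sub hWlim
  have hsum : HasSum (fun k => ‖f^[k] x‖ ^ 2) (W x) :=
    (hasSum_iff_tendsto_nat_of_nonneg (fun k => by positivity) _).mpr hlim
  exact hsum.tsum_eq.symm
end

section
/- Under the stated hypotheses, if x⁰ lies in the topological boundary (frontier) of DA(0) and x⁰ ∈ Ω, then the orbit of x⁰ stays bounded away from 0: there exists r > 0 such that ‖f⁽ᵏ⁾(x⁰)‖ ≥ r for all k ∈ ℕ. -/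
open Filter Topology

/-- Local attraction: if `f 0 = 0`, `f` is differentiable at `0` with derivative `A`
whose powers decay geometrically, then all points in a small ball converge to `0`
under iteration, and the ball lies inside `Ω`. -/
lemma local_attraction {E : Type*} [NormedAddCommGroup E] [NormedSpace ℝ E]
    (Ω : Set E) (hΩ : IsOpen Ω) (h0Ω : (0 : E) ∈ Ω)
    (f : E → E) (hf0 : f 0 = 0)
    (A : E →L[ℝ] E) (hA : HasFDerivAt f A 0)
    (c ρ : ℝ) (hc : 1 ≤ c) (hρ : ρ ∈ Set.Ioo (0 : ℝ) 1)
    (hAk : ∀ k : ℕ, ‖A ^ k‖ ≤ c * ρ ^ k) :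
    ∃ δ > 0, Metric.ball (0 : E) δ ⊆ Ω ∧
      ∀ x ∈ Metric.ball (0 : E) δ, Tendsto (fun k => f^[k] x) atTop (𝓝 0) := by
  -- choose m with c * ρ ^ m < 1/2
  obtain ⟨m, hm⟩ : ∃ m : ℕ, c * ρ ^ m < 1 / 2 := by
    have h := tendsto_pow_atTop_nhds_zero_of_lt_one hρ.1.le hρ.2
    have hcpos : (0 : ℝ) < c := lt_of_lt_of_le one_pos hc
    have := (h.const_mul c).eventually (gt_mem_nhds (by norm_num : (c : ℝ) * 0 < 1 / 2))
    simpa using this.exists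
  have hmpos : 0 < m := by
    rcases Nat.eq_zero_or_pos m with h | h
    · exfalso; rw [h] at hm; simp at hm; linarith
    · exact h
  set g := f^[m] with hg
  have hg0 : g 0 = 0 := Function.iterate_fixed hf0 m
  have hDg : HasFDerivAt g (A ^ m) 0 := hA.iterate hf0 m
  have hAm : ‖A ^ m‖ < 1 / 2 := lt_of_le_of_lt (hAk m) hm
  -- contraction estimate on a small ball
  have hlittle : ∀ᶠ x in 𝓝 (0 : E), ‖g x - (A ^ m) x‖ ≤ 1 / 4 * ‖x‖ := by
    have := hDg.isLittleO.def (by norm_num : (0:ℝ) < 1 / 4)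
    simpa [hg0] using this
  have hcontr : ∀ᶠ x in 𝓝 (0 : E), ‖g x‖ ≤ 3 / 4 * ‖x‖ := by
    filter_upwards [hlittle] with x hx
    have h1 : ‖(A ^ m) x‖ ≤ 1 / 2 * ‖x‖ := by
      calc ‖(A ^ m) x‖ ≤ ‖A ^ m‖ * ‖x‖ := (A ^ m).le_opNorm x
      _ ≤ 1 / 2 * ‖x‖ := by
          apply mul_le_mul_of_nonneg_right hAm.le (norm_nonneg x)
    calc ‖g x‖ = ‖(A ^ m) x + (g x - (A ^ m) x)‖ := by congr 1; abel
    _ ≤ ‖(A ^ m) x‖ + ‖g x - (A ^ m) x‖ := norm_add_le _ _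
    _ ≤ 1 / 2 * ‖x‖ + 1 / 4 * ‖x‖ := add_le_add h1 hx
    _ = 3 / 4 * ‖x‖ := by ring
  have hΩnhds : ∀ᶠ x in 𝓝 (0 : E), x ∈ Ω := hΩ.mem_nhds h0Ω
  obtain ⟨δ, hδpos, hδ⟩ := Metric.eventually_nhds_iff_ball.1 (hcontr.and hΩnhds)
  refine ⟨δ, hδpos, fun x hx => (hδ x hx).2, fun x hx => ?_⟩
  -- iterates of g stay in the ball and contract
  have hgq : ∀ q : ℕ, g^[q] x ∈ Metric.ball (0 : E) δ ∧
      ‖g^[q] x‖ ≤ (3 / 4) ^ q * ‖x‖ := by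
    intro q
    induction q with
    | zero => simpa using hx
    | succ q ih =>
      have h1 : ‖g (g^[q] x)‖ ≤ 3 / 4 * ‖g^[q] x‖ := (hδ _ ih.1).1
      have h2 : ‖g^[q+1] x‖ ≤ (3/4) ^ (q+1) * ‖x‖ := by
        rw [Function.iterate_succ_apply']
        calc ‖g (g^[q] x)‖ ≤ 3 / 4 * ‖g^[q] x‖ := h1
        _ ≤ 3 / 4 * ((3/4) ^ q * ‖x‖) := by nlinarith [ih.2]
        _ = (3/4) ^ (q+1) * ‖x‖ := by ring
      refine ⟨?_, h2⟩
      rw [mem_ball_zero_iff]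
      have hxδ : ‖x‖ < δ := mem_ball_zero_iff.1 hx
      have hpow : (3/4 : ℝ) ^ (q+1) ≤ 1 := pow_le_one₀ (by norm_num) (by norm_num)
      nlinarith [norm_nonneg x, h2]
  have hgtend : Tendsto (fun q => g^[q] x) atTop (𝓝 0) := by
    rw [tendsto_zero_iff_norm_tendsto_zero]
    have h1 : Tendsto (fun q : ℕ => (3/4 : ℝ) ^ q * ‖x‖) atTop (𝓝 0) := by
      have := tendsto_pow_atTop_nhds_zero_of_lt_one (by norm_num : (0:ℝ) ≤ 3/4)
        (by norm_num : (3/4 : ℝ) < 1)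
      simpa using this.mul_const ‖x‖
    exact squeeze_zero (fun q => norm_nonneg _) (fun q => (hgq q).2) h1
  -- continuity of f^[r] at 0 for r < m
  have hfc : ContinuousAt f 0 := hA.continuousAt
  have hfr : ∀ r : ℕ, ContinuousAt f^[r] 0 ∧ f^[r] 0 = 0 := by
    intro r
    induction r with
    | zero => exact ⟨continuousAt_id, rfl⟩
    | succ r ih =>
      refine ⟨?_, by rw [Function.iterate_succ_apply', ih.2, hf0]⟩
      rw [Function.iterate_succ']
      exact ContinuousAt.comp (by rw [ih.2]; exact hfc) ih.1
  rw [NormedAddCommGroup.tendsto_atTop]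
  intro ε hε
  -- eventually all f^[r] (g^[q] x), r < m, are small
  have hev : ∀ᶠ y in 𝓝 (0 : E), ∀ r ∈ Finset.range m, ‖f^[r] y‖ < ε := by
    rw [Filter.eventually_all_finset]
    intro r _
    have h2 : Tendsto (fun y => ‖f^[r] y‖) (𝓝 (0 : E)) (𝓝 0) := by
      have h3 : ContinuousAt (fun y => ‖f^[r] y‖) 0 := (hfr r).1.norm
      simpa [ContinuousAt, (hfr r).2] using h3
    exact h2.eventually (gt_mem_nhds hε)
  obtain ⟨Q, hQ⟩ := Filter.eventually_atTop.1 (hgtend.eventually hev)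
  refine ⟨m * Q, fun k hk => ?_⟩
  have hkey : f^[k] x = f^[k % m] (g^[k / m] x) := by
    conv_lhs => rw [← Nat.div_add_mod k m]
    rw [add_comm, Function.iterate_add_apply, hg, ← Function.iterate_mul]
  rw [hkey]
  have hq : Q ≤ k / m := Nat.le_div_iff_mul_le hmpos |>.2 (by rw [mul_comm]; exact hk)
  have := hQ (k / m) hq (k % m) (Finset.mem_range.2 (Nat.mod_lt k hmpos))
  simpa using this

/-- the orbit of a boundary point of `DA(0)` stays bounded away from `0`. -/
theorem stmt_8 (n : ℕ) (hn : 1 ≤ n)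
    (Ω : Set (EuclideanSpace ℝ (Fin n))) (hΩ : IsOpen Ω)
    (h0Ω : (0 : EuclideanSpace ℝ (Fin n)) ∈ Ω)
    (f : EuclideanSpace ℝ (Fin n) → EuclideanSpace ℝ (Fin n))
    (hf : AnalyticOn ℝ f Ω) (hmaps : Set.MapsTo f Ω Ω) (hf0 : f 0 = 0)
    (A : EuclideanSpace ℝ (Fin n) →L[ℝ] EuclideanSpace ℝ (Fin n))
    (hA : HasFDerivAt f A 0)
    (c ρ : ℝ) (hc : 1 ≤ c) (hρ : ρ ∈ Set.Ioo (0 : ℝ) 1)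
    (hAk : ∀ k : ℕ, ‖A ^ k‖ ≤ c * ρ ^ k)
    (x0 : EuclideanSpace ℝ (Fin n))
    (hx0 : x0 ∈ frontier {x ∈ Ω | Tendsto (fun k => f^[k] x) atTop (𝓝 0)})
    (hx0Ω : x0 ∈ Ω) :
    ∃ r > 0, ∀ k : ℕ, r ≤ ‖f^[k] x0‖ := by
  obtain ⟨δ, hδpos, hδΩ, hδball⟩ :=
    local_attraction Ω hΩ h0Ω f hf0 A hA c ρ hc hρ hAk
  by_contra h
  push_neg at h
  obtain ⟨k, hk⟩ := h δ hδpos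
  set S := {x ∈ Ω | Tendsto (fun k => f^[k] x) atTop (𝓝 0)} with hS
  -- f^[k] is continuous at every point of Ω
  have hcontAt : ∀ j : ℕ, ∀ x ∈ Ω, ContinuousAt f^[j] x := by
    intro j
    induction j with
    | zero => exact fun x _ => continuousAt_id
    | succ j ih =>
      intro x hx
      rw [Function.iterate_succ']
      exact ContinuousAt.comp
        ((hf.continuousOn.continuousAt (hΩ.mem_nhds (hmaps.iterate j hx))))
        (ih x hx)
  -- the preimage of the small ball intersected with Ω is a nhds of x0 inside S
  have hmem : f^[k] x0 ∈ Metric.ball (0 : EuclideanSpace ℝ (Fin n)) δ :=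
    mem_ball_zero_iff.2 hk
  have hnhds : f^[k] ⁻¹' Metric.ball 0 δ ∈ 𝓝 x0 :=
    (hcontAt k x0 hx0Ω).preimage_mem_nhds (Metric.isOpen_ball.mem_nhds hmem)
  have hSnhds : S ∈ 𝓝 x0 := by
    filter_upwards [hnhds, hΩ.mem_nhds hx0Ω] with x hx hxΩ
    refine ⟨hxΩ, ?_⟩
    have htail : Tendsto (fun j => f^[j] (f^[k] x)) atTop (𝓝 0) := hδball _ hx
    have heq : (fun j => f^[j] (f^[k] x)) = fun j => f^[j + k] x := by
      funext j; rw [Function.iterate_add_apply]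
    rw [heq] at htail
    exact (tendsto_add_atTop_iff_nat k).1 htail
  have : x0 ∈ interior S := mem_interior_iff_mem_nhds.2 hSnhds
  rw [frontier] at hx0
  exact hx0.2 this
end

section
/- Under the stated hypotheses, the Lyapunov function V(x) = ∑_{k=0}^∞ ‖f⁽ᵏ⁾(x)‖² blows up at the boundary of the domain of attraction: if x⁰ ∈ frontier(DA(0)) and x⁰ ∈ Ω, then V(x) → +∞ as x → x⁰ within DA(0) (i.e., V tends to +∞ along the filter 𝓝[DA(0)] x⁰). -/
open Filter Topology

lemma aux_bound {E : Type*} [NormedAddCommGroup E] [NormedSpace ℝ E]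
    (f : E → E) (hf0 : f 0 = 0) (A : E →L[ℝ] E) (hA : HasFDerivAt f A 0)
    {c ρ : ℝ} (hc : 1 ≤ c) (hρ : ρ ∈ Set.Ioo (0 : ℝ) 1)
    (hAk : ∀ k : ℕ, ‖A ^ k‖ ≤ c * ρ ^ k) :
    ∃ C : ℝ, 1 ≤ C ∧ ∃ θ : ℝ, 0 ≤ θ ∧ θ < 1 ∧ ∃ δ : ℝ, 0 < δ ∧
      ∀ x : E, ‖x‖ ≤ δ → ∀ k : ℕ, ‖f^[k] x‖ ≤ C * θ ^ k * ‖x‖ := by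
  obtain ⟨hρ0, hρ1⟩ := hρ
  set σ : ℝ := (1 + ρ) / 2 with hσdef
  have hσ0 : 0 < σ := by positivity
  have hρσ : ρ < σ := by rw [hσdef]; linarith
  have hσ1 : σ < 1 := by rw [hσdef]; linarith
  set r : ℝ := ρ / σ with hrdef
  have hr0 : 0 < r := by positivity
  have hr1 : r < 1 := (div_lt_one hσ0).2 hρσ
  -- adapted norm
  set N : E → ℝ := fun x => ∑' k : ℕ, ‖(A ^ k) x‖ * σ⁻¹ ^ k with hNdef
  have hterm_nonneg : ∀ (x : E) (k : ℕ), 0 ≤ ‖(A ^ k) x‖ * σ⁻¹ ^ k := by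
    intro x k; positivity
  have hterm_le : ∀ (x : E) (k : ℕ), ‖(A ^ k) x‖ * σ⁻¹ ^ k ≤ (c * ‖x‖) * r ^ k := by
    intro x k
    have h1 : ‖(A ^ k) x‖ ≤ c * ρ ^ k * ‖x‖ :=
      le_trans ((A ^ k).le_opNorm x) (by
        exact mul_le_mul_of_nonneg_right (hAk k) (norm_nonneg x))
    have : ‖(A ^ k) x‖ * σ⁻¹ ^ k ≤ (c * ρ ^ k * ‖x‖) * σ⁻¹ ^ k :=
      mul_le_mul_of_nonneg_right h1 (by positivity)
    refine this.trans_eq ?_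
    rw [hrdef, div_pow, div_eq_mul_inv, ← inv_pow]
    ring
  have hsum : ∀ x : E, Summable (fun k : ℕ => ‖(A ^ k) x‖ * σ⁻¹ ^ k) := by
    intro x
    exact Summable.of_nonneg_of_le (hterm_nonneg x) (hterm_le x)
      (((summable_geometric_of_lt_one hr0.le hr1).mul_left _))
  have hN_nonneg : ∀ x : E, 0 ≤ N x := fun x => tsum_nonneg (hterm_nonneg x)
  have hle1 : ∀ x : E, ‖x‖ ≤ N x := by
    intro x
    calc ‖x‖ = ‖(A ^ 0) x‖ * σ⁻¹ ^ 0 := by simp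
      _ ≤ N x := Summable.le_tsum (hsum x) 0 (fun j _ => hterm_nonneg x j)
  set c' : ℝ := c * (1 - r)⁻¹ with hc'def
  have hc'1 : 1 ≤ c' := by
    have h1 : (1:ℝ) ≤ (1 - r)⁻¹ := by
      rw [le_inv_comm₀ one_pos (by linarith)]
      · linarith
    calc (1:ℝ) = 1 * 1 := by ring
    _ ≤ c * (1 - r)⁻¹ := by exact mul_le_mul hc h1 one_pos.le (by linarith)
  have hc'0 : 0 < c' := lt_of_lt_of_le one_pos hc'1
  have hle2 : ∀ x : E, N x ≤ c' * ‖x‖ := by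
    intro x
    calc N x ≤ ∑' k : ℕ, (c * ‖x‖) * r ^ k :=
          Summable.tsum_le_tsum (hterm_le x) (hsum x)
            (((summable_geometric_of_lt_one hr0.le hr1).mul_left _))
      _ = (c * ‖x‖) * (1 - r)⁻¹ := by
          rw [tsum_mul_left, tsum_geometric_of_lt_one hr0.le hr1]
      _ = c' * ‖x‖ := by ring
  have hNA : ∀ x : E, N (A x) ≤ σ * N x := by
    intro x
    have hrewrite : ∀ k : ℕ, (A ^ k) (A x) = (A ^ (k + 1)) x := by
      intro k
      rw [pow_succ]
      rfl
    have hsumσ : Summable (fun k : ℕ => σ * (‖(A ^ k) x‖ * σ⁻¹ ^ k)) :=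
      (hsum x).mul_left σ
    have key : (∑' k : ℕ, ‖(A ^ k) (A x)‖ * σ⁻¹ ^ k)
        ≤ ∑' k : ℕ, σ * (‖(A ^ k) x‖ * σ⁻¹ ^ k) := by
      refine Summable.tsum_le_tsum_of_inj Nat.succ Nat.succ_injective
        (fun j _ => by positivity) (fun k => ?_) (hsum (A x)) hsumσ
      rw [hrewrite k]
      have : σ * (‖(A ^ (k+1)) x‖ * σ⁻¹ ^ (k+1)) = ‖(A ^ (k+1)) x‖ * σ⁻¹ ^ k := by
        rw [pow_succ]
        field_simp
        linear_combination (‖(A ^ k * A) x‖ * σ⁻¹ ^ k) * mul_inv_cancel₀ hσ0.ne'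
      rw [Nat.succ_eq_add_one, this]
    calc N (A x) ≤ ∑' k : ℕ, σ * (‖(A ^ k) x‖ * σ⁻¹ ^ k) := key
      _ = σ * N x := tsum_mul_left
  have hNsub : ∀ x y : E, N (x + y) ≤ N x + N y := by
    intro x y
    calc N (x + y) ≤ ∑' k : ℕ, (‖(A ^ k) x‖ * σ⁻¹ ^ k + ‖(A ^ k) y‖ * σ⁻¹ ^ k) := by
          refine Summable.tsum_le_tsum (fun k => ?_) (hsum _) ((hsum x).add (hsum y))
          rw [← add_mul]
          exact mul_le_mul_of_nonneg_right (by simpa using norm_add_le _ _) (by positivity)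
      _ = N x + N y := Summable.tsum_add (hsum x) (hsum y)
  -- little-o estimate
  set ε : ℝ := (1 - σ) / (2 * c') with hεdef
  have hε0 : 0 < ε := by
    apply div_pos (by linarith) (by linarith)
  have hlo := (hasFDerivAt_iff_isLittleO_nhds_zero.1 hA)
  rw [Asymptotics.isLittleO_iff] at hlo
  have hlo' := hlo hε0
  simp only [zero_add, hf0, sub_zero] at hlo'
  rw [Metric.eventually_nhds_iff] at hlo'
  obtain ⟨δ, hδ0, hδ⟩ := hlo'
  set θ : ℝ := σ + c' * ε with hθdef
  have hθ1 : θ < 1 := by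
    rw [hθdef, hεdef]
    have : c' * ((1 - σ) / (2 * c')) = (1 - σ) / 2 := by field_simp
    rw [this]; linarith
  have hθ0 : 0 ≤ θ := by
    have : 0 ≤ c' * ε := by positivity
    rw [hθdef]; linarith
  have hσθ : σ ≤ θ := by
    have : 0 ≤ c' * ε := by positivity
    rw [hθdef]; linarith
  refine ⟨c', hc'1, θ, hθ0, hθ1, δ / (2 * c'), by positivity, ?_⟩
  intro x hx k
  have hstep : ∀ j : ℕ, N (f^[j] x) ≤ θ ^ j * N x := by
    intro j
    induction j with
    | zero => simp
    | succ j ih =>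
      set y : E := f^[j] x with hydef
      have hNy : N y ≤ N x := le_trans ih (by
        nlinarith [hN_nonneg x, pow_le_one₀ hθ0 hθ1.le (n := j)])
      have hy_small : ‖y‖ < δ := by
        have h1 : ‖y‖ ≤ c' * ‖x‖ := le_trans (hle1 y) (hNy.trans (hle2 x))
        have h2 : c' * ‖x‖ ≤ c' * (δ / (2 * c')) :=
          mul_le_mul_of_nonneg_left hx hc'0.le
        have h3 : c' * (δ / (2 * c')) = δ / 2 := by field_simp
        calc ‖y‖ ≤ δ / 2 := by rw [← h3]; exact h1.trans h2
          _ < δ := by linarith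
      have hdist : dist y 0 < δ := by rwa [dist_zero_right]
      have hlittle : ‖f y - A y‖ ≤ ε * ‖y‖ := hδ hdist
      have key : N (f y) ≤ θ * N y := by
        have h1 : f y = A y + (f y - A y) := by abel
        calc N (f y) = N (A y + (f y - A y)) := by rw [← h1]
          _ ≤ N (A y) + N (f y - A y) := hNsub _ _
          _ ≤ σ * N y + c' * ‖f y - A y‖ := add_le_add (hNA y) (hle2 _)
          _ ≤ σ * N y + c' * (ε * ‖y‖) := by
              have := mul_le_mul_of_nonneg_left hlittle hc'0.le
              linarith
          _ ≤ σ * N y + c' * (ε * N y) := by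
              have := mul_le_mul_of_nonneg_left
                (mul_le_mul_of_nonneg_left (hle1 y) hε0.le) hc'0.le
              linarith
          _ = θ * N y := by rw [hθdef]; ring
      calc N (f^[j+1] x) = N (f y) := by rw [Function.iterate_succ_apply']
        _ ≤ θ * N y := key
        _ ≤ θ * (θ ^ j * N x) := mul_le_mul_of_nonneg_left ih hθ0
        _ = θ ^ (j+1) * N x := by ring
  calc ‖f^[k] x‖ ≤ N (f^[k] x) := hle1 _
    _ ≤ θ ^ k * N x := hstep k
    _ ≤ θ ^ k * (c' * ‖x‖) := mul_le_mul_of_nonneg_left (hle2 x) (by positivity)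
    _ = c' * θ ^ k * ‖x‖ := by ring

/-- the Lyapunov function `V` blows up at the boundary of `DA(0)`. -/
theorem stmt_9 (n : ℕ) (hn : 1 ≤ n)
    (Ω : Set (EuclideanSpace ℝ (Fin n))) (hΩ : IsOpen Ω)
    (h0Ω : (0 : EuclideanSpace ℝ (Fin n)) ∈ Ω)
    (f : EuclideanSpace ℝ (Fin n) → EuclideanSpace ℝ (Fin n))
    (hf : AnalyticOn ℝ f Ω) (hmaps : Set.MapsTo f Ω Ω) (hf0 : f 0 = 0)
    (A : EuclideanSpace ℝ (Fin n) →L[ℝ] EuclideanSpace ℝ (Fin n))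
    (hA : HasFDerivAt f A 0)
    (c ρ : ℝ) (hc : 1 ≤ c) (hρ : ρ ∈ Set.Ioo (0 : ℝ) 1)
    (hAk : ∀ k : ℕ, ‖A ^ k‖ ≤ c * ρ ^ k)
    (x0 : EuclideanSpace ℝ (Fin n))
    (hx0 : x0 ∈ frontier {x ∈ Ω | Tendsto (fun k => f^[k] x) atTop (𝓝 0)})
    (hx0Ω : x0 ∈ Ω) :
    Tendsto (fun x : EuclideanSpace ℝ (Fin n) => ∑' k : ℕ, ‖f^[k] x‖ ^ 2)
      (𝓝[{x ∈ Ω | Tendsto (fun k => f^[k] x) atTop (𝓝 0)}] x0) atTop := by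
  set s : Set (EuclideanSpace ℝ (Fin n)) :=
    {x ∈ Ω | Tendsto (fun k => f^[k] x) atTop (𝓝 0)} with hsdef
  obtain ⟨C, hC1, θ, hθ0, hθ1, δ, hδ0, hbound⟩ := aux_bound f hf0 A hA hc hρ hAk
  have hC0 : 0 < C := lt_of_lt_of_le one_pos hC1
  obtain ⟨δ₁, hδ₁0, hballΩ⟩ : ∃ δ₁ > 0, Metric.ball (0 : EuclideanSpace ℝ (Fin n)) δ₁ ⊆ Ω :=
    Metric.mem_nhds_iff.1 (hΩ.mem_nhds h0Ω)
  set δ₂ : ℝ := min δ δ₁ with hδ₂def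
  have hδ₂0 : 0 < δ₂ := lt_min hδ0 hδ₁0
  have hcontf : ContinuousOn f Ω := hf.continuousOn
  -- orbits of points of Ω stay in Ω
  have horbit : ∀ x ∈ Ω, ∀ k : ℕ, f^[k] x ∈ Ω := by
    intro x hx k
    induction k with
    | zero => simpa using hx
    | succ k ih => rw [Function.iterate_succ_apply']; exact hmaps ih
  -- iterates are continuous at points of Ω
  have hcontIter : ∀ (k : ℕ), ∀ x ∈ Ω, ContinuousAt (f^[k]) x := by
    intro k
    induction k with
    | zero => intro x _; simpa using continuousAt_id
    | succ k ih =>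
      intro x hx
      rw [Function.iterate_succ']
      exact (hcontf.continuousAt (hΩ.mem_nhds (horbit x hx k))).comp (ih x hx)
  -- small balls are in the basin of attraction
  have hball_s : ∀ x : EuclideanSpace ℝ (Fin n), ‖x‖ < δ₂ → x ∈ s := by
    intro x hx
    have hx1 : ‖x‖ < δ₁ := lt_of_lt_of_le hx (min_le_right _ _)
    have hxΩ : x ∈ Ω := hballΩ (by simpa [Metric.mem_ball, dist_zero_right] using hx1)
    refine ⟨hxΩ, ?_⟩
    have hxδ : ‖x‖ ≤ δ := le_of_lt (lt_of_lt_of_le hx (min_le_left _ _))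
    apply squeeze_zero_norm (fun k => hbound x hxδ k)
    have : Tendsto (fun k : ℕ => C * θ ^ k * ‖x‖) atTop (𝓝 (C * 0 * ‖x‖)) :=
      (((tendsto_pow_atTop_nhds_zero_of_lt_one hθ0 hθ1).const_mul C).mul_const ‖x‖)
    simpa using this
  -- summability on the basin
  have hsummable : ∀ x ∈ s, Summable (fun k : ℕ => ‖f^[k] x‖ ^ 2) := by
    intro x hx
    obtain ⟨K, hK⟩ : ∃ K : ℕ, ‖f^[K] x‖ < δ₂ :=
      ((NormedAddCommGroup.tendsto_nhds_zero.1 hx.2) δ₂ hδ₂0).exists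
    rw [← summable_nat_add_iff K]
    set y := f^[K] x with hydef
    have hyδ : ‖y‖ ≤ δ := le_of_lt (lt_of_lt_of_le hK (min_le_left _ _))
    refine Summable.of_nonneg_of_le (fun j => by positivity)
      (fun j => ?_) (((summable_geometric_of_lt_one (by positivity)
        (by nlinarith : θ ^ 2 < 1)).mul_left ((C * ‖y‖) ^ 2)))
    have h1 : ‖f^[j + K] x‖ = ‖f^[j] y‖ := by rw [Function.iterate_add_apply]
    have h2 : ‖f^[j] y‖ ≤ C * θ ^ j * ‖y‖ := hbound y hyδ j
    calc ‖f^[j + K] x‖ ^ 2 = ‖f^[j] y‖ ^ 2 := by rw [h1]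
      _ ≤ (C * θ ^ j * ‖y‖) ^ 2 := by
          exact pow_le_pow_left₀ (norm_nonneg _) h2 2
      _ = (C * ‖y‖) ^ 2 * (θ ^ 2) ^ j := by ring
  -- the basin is open
  have hs_open : IsOpen s := by
    rw [isOpen_iff_mem_nhds]
    intro x hx
    obtain ⟨K, hK⟩ : ∃ K : ℕ, ‖f^[K] x‖ < δ₂ :=
      ((NormedAddCommGroup.tendsto_nhds_zero.1 hx.2) δ₂ hδ₂0).exists
    have hpre : f^[K] ⁻¹' (Metric.ball 0 δ₂) ∈ 𝓝 x :=
      (hcontIter K x hx.1).preimage_mem_nhds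
        (Metric.isOpen_ball.mem_nhds (by simpa [Metric.mem_ball, dist_zero_right] using hK))
    refine mem_of_superset (inter_mem (hΩ.mem_nhds hx.1) hpre) ?_
    rintro y ⟨hyΩ, hyK⟩
    refine ⟨hyΩ, ?_⟩
    have hyKs : f^[K] y ∈ s := hball_s _ (by simpa [Metric.mem_ball, dist_zero_right] using hyK)
    have : Tendsto (fun j : ℕ => f^[j + K] y) atTop (𝓝 0) := by
      simpa [Function.iterate_add_apply] using hyKs.2
    exact (tendsto_add_atTop_iff_nat K).1 this
  -- x0 is not in the basin
  have hx0_not : x0 ∉ s := by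
    rw [hs_open.frontier_eq] at hx0
    exact hx0.2
  have hnot : ¬ Tendsto (fun k => f^[k] x0) atTop (𝓝 0) := fun h => hx0_not ⟨hx0Ω, h⟩
  rw [NormedAddCommGroup.tendsto_nhds_zero] at hnot
  push_neg at hnot
  obtain ⟨ε, hε0, hfreq⟩ := hnot
  have hfreq' : ∃ᶠ k in atTop, ε ≤ ‖f^[k] x0‖ := by
    refine hfreq.mono fun k hk => ?_
    exact hk
  -- partial sums at x0 are unbounded
  have hub : ∀ M : ℝ, ∃ N : ℕ, M < ∑ k ∈ Finset.range N, ‖f^[k] x0‖ ^ 2 := by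
    intro M
    by_contra hcon
    push_neg at hcon
    have hsum0 : Summable (fun k : ℕ => ‖f^[k] x0‖ ^ 2) :=
      summable_of_sum_range_le (fun k => by positivity) hcon
    have htend := hsum0.tendsto_atTop_zero
    have hev : ∀ᶠ k in atTop, ‖f^[k] x0‖ ^ 2 < ε ^ 2 := by
      have := htend.eventually (eventually_lt_nhds (show (0:ℝ) < ε ^ 2 by positivity))
      simpa using this
    obtain ⟨k, hk1, hk2⟩ := (hfreq'.and_eventually hev).exists
    have : ε ^ 2 ≤ ‖f^[k] x0‖ ^ 2 := pow_le_pow_left₀ hε0.le hk1 2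
    linarith
  rw [tendsto_atTop]
  intro b
  obtain ⟨N, hN⟩ := hub b
  have hScont : ContinuousAt (fun x => ∑ k ∈ Finset.range N, ‖f^[k] x‖ ^ 2) x0 := by
    apply tendsto_finset_sum
    intro k _
    exact ((hcontIter k x0 hx0Ω).norm.pow 2)
  have hev : ∀ᶠ x in 𝓝 x0, b < ∑ k ∈ Finset.range N, ‖f^[k] x‖ ^ 2 :=
    hScont.eventually (eventually_gt_nhds hN)
  filter_upwards [eventually_nhdsWithin_of_eventually_nhds hev, self_mem_nhdsWithin]
    with x hxb hxs
  have : (∑ k ∈ Finset.range N, ‖f^[k] x‖ ^ 2) ≤ ∑' k : ℕ, ‖f^[k] x‖ ^ 2 :=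
    Summable.sum_le_tsum (Finset.range N) (fun k _ => by positivity) (hsummable x hxs)
  linarith
end

section
/- Key exponential estimate: let E = ℝⁿ, let A : E → E be a continuous linear map, let c̄ ≥ 1, r ∈ (0,1) satisfy ‖Aᵏ(x)‖ ≤ c̄·rᵏ·‖x‖ for all x ∈ E and all k ∈ ℕ, and set ε = (1 − r)/(2c̄). Suppose (y_k), k ∈ ℕ, is a sequence in E satisfying y_{k+1} = A(y_k) + h_k with ‖h_k‖ ≤ ε·‖y_k‖ for all k ∈ ℕ. Then ‖y_k‖ ≤ c̄·‖y₀‖·((r + 1)/2)ᵏ for all k ∈ ℕ. -/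
/-- key exponential estimate obtained via variation of constants and the
discrete Gronwall inequality. -/
theorem stmt_13 (n : ℕ)
    (A : EuclideanSpace ℝ (Fin n) →L[ℝ] EuclideanSpace ℝ (Fin n))
    (c : ℝ) (hc : 1 ≤ c) (r : ℝ) (hr : r ∈ Set.Ioo (0 : ℝ) 1)
    (hA : ∀ (x : EuclideanSpace ℝ (Fin n)) (k : ℕ), ‖(A ^ k) x‖ ≤ c * r ^ k * ‖x‖)
    (h y : ℕ → EuclideanSpace ℝ (Fin n))
    (hy : ∀ k : ℕ, y (k + 1) = A (y k) + h k)
    (hh : ∀ k : ℕ, ‖h k‖ ≤ (1 - r) / (2 * c) * ‖y k‖) :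
    ∀ k : ℕ, ‖y k‖ ≤ c * ‖y 0‖ * ((r + 1) / 2) ^ k := by
  obtain ⟨hr0, hr1⟩ := hr
  have hc0 : (0:ℝ) < c := lt_of_lt_of_le one_pos hc
  set s : ℝ := (r + 1) / 2 with hs
  have hs0 : 0 < s := by rw [hs]; linarith
  have hεc : (1 - r) / (2 * c) * c = s - r := by
    field_simp [hs]; ring
  -- variation of constants
  have voc : ∀ k, y k = (A ^ k) (y 0) + ∑ j ∈ Finset.range k, (A ^ (k - 1 - j)) (h j) := by
    intro k
    induction k with
    | zero => simp
    | succ k ih =>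
      rw [hy k, ih]
      simp only [map_add, map_sum, Finset.sum_range_succ]
      have h0 : k + 1 - 1 - k = 0 := by omega
      rw [h0, pow_zero]
      have h1 : ∀ j ∈ Finset.range k,
          A ((A ^ (k - 1 - j)) (h j)) = (A ^ (k + 1 - 1 - j)) (h j) := by
        intro j hj
        have hj' : j < k := Finset.mem_range.mp hj
        have he : k + 1 - 1 - j = (k - 1 - j) + 1 := by omega
        rw [he, pow_succ']
        rfl
      rw [Finset.sum_congr rfl h1]
      have h2 : A ((A ^ k) (y 0)) = (A ^ (k + 1)) (y 0) := by
        rw [pow_succ']; rfl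
      rw [h2]
      simp [add_assoc]
  intro k
  induction k using Nat.strong_induction_on with
  | _ k IH =>
    have hy0 : (0:ℝ) ≤ ‖y 0‖ := norm_nonneg _
    calc ‖y k‖ ≤ ‖(A ^ k) (y 0)‖ + ∑ j ∈ Finset.range k, ‖(A ^ (k - 1 - j)) (h j)‖ := by
          rw [voc k]
          exact (norm_add_le _ _).trans (by gcongr; exact norm_sum_le _ _)
      _ ≤ c * r ^ k * ‖y 0‖ + ∑ j ∈ Finset.range k,
            c * r ^ (k - 1 - j) * ((1 - r) / (2 * c) * (c * ‖y 0‖ * s ^ j)) := by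
          gcongr with j hj
          · exact hA _ _
          · calc ‖(A ^ (k - 1 - j)) (h j)‖ ≤ c * r ^ (k - 1 - j) * ‖h j‖ := hA _ _
              _ ≤ c * r ^ (k - 1 - j) * ((1 - r) / (2 * c) * (c * ‖y 0‖ * s ^ j)) := by
                  have hbd : ‖h j‖ ≤ (1 - r) / (2 * c) * (c * ‖y 0‖ * s ^ j) := by
                    refine (hh j).trans ?_
                    have : ‖y j‖ ≤ c * ‖y 0‖ * s ^ j := IH j (Finset.mem_range.mp hj)
                    have hε0 : (0:ℝ) ≤ (1 - r) / (2 * c) := div_nonneg (by linarith) (by linarith)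
                    exact mul_le_mul_of_nonneg_left this hε0
                  have : (0:ℝ) ≤ c * r ^ (k - 1 - j) := mul_nonneg (by linarith) (pow_nonneg hr0.le _)
                  exact mul_le_mul_of_nonneg_left hbd this
      _ = c * ‖y 0‖ * r ^ k +
            (∑ j ∈ Finset.range k, s ^ j * r ^ (k - 1 - j)) * (s - r) * (c * ‖y 0‖) := by
          congr 1
          · ring
          · rw [Finset.sum_mul, Finset.sum_mul]
            refine Finset.sum_congr rfl fun j _ => ?_
            have : c * r ^ (k - 1 - j) * ((1 - r) / (2 * c) * (c * ‖y 0‖ * s ^ j))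
                = ((1 - r) / (2 * c) * c) * (r ^ (k - 1 - j) * (c * ‖y 0‖ * s ^ j)) := by
              ring
            rw [this, hεc]; ring
      _ = c * ‖y 0‖ * s ^ k := by
          rw [geom_sum₂_mul]; ring
end

section
/- For the map g : ℝ² → ℝ² defined by g(x, y) = (x·y + y, y³), the domain of attraction of the fixed point (0,0) is exactly ℝ × (−1, 1): for every (x, y) ∈ ℝ², the iterates g⁽ᵏ⁾(x, y) converge to (0,0) as k → ∞ if and only if |y| < 1. -/
open Filter Topology

/-- for `g(x,y) = (xy + y, y³)`, the domain of attraction of the fixed point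
`(0,0)` is exactly `ℝ × (−1,1)`. -/
theorem stmt_15 (g : EuclideanSpace ℝ (Fin 2) → EuclideanSpace ℝ (Fin 2))
    (hg : ∀ p : EuclideanSpace ℝ (Fin 2),
      g p 0 = p 0 * p 1 + p 1 ∧ g p 1 = (p 1) ^ 3) :
    ∀ p : EuclideanSpace ℝ (Fin 2),
      Tendsto (fun k => g^[k] p) atTop (𝓝 0) ↔ |p 1| < 1 := by
  intro p
  set x := p 0 with hx
  set y := p 1 with hy
  have ha : ∀ k, (g^[k] p) 1 = y ^ 3 ^ k := by
    intro k
    induction k with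
    | zero => simp [hy]
    | succ n ih =>
      rw [Function.iterate_succ_apply', (hg _).2, ih, ← pow_mul, ← pow_succ]
  have hb : ∀ k, (g^[k+1] p) 0 = (g^[k] p) 0 * y ^ 3 ^ k + y ^ 3 ^ k := by
    intro k
    rw [Function.iterate_succ_apply', (hg _).1, ha]
  constructor
  · intro h
    by_contra hy1
    push_neg at hy1
    have h1 : Tendsto (fun k => (g^[k] p) 1) atTop (𝓝 0) := by
      have hc : Continuous fun q : EuclideanSpace ℝ (Fin 2) => q 1 :=
        (continuous_apply 1).comp (PiLp.continuous_ofLp 2 _)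
      have := (hc.tendsto 0).comp h
      exact this
    obtain ⟨N, hN⟩ := Metric.tendsto_atTop.mp h1 1 one_pos
    have := hN N le_rfl
    rw [Real.dist_eq, sub_zero, ha] at this
    have h2 : (1:ℝ) ≤ |y ^ 3 ^ N| := by
      rw [abs_pow]
      exact one_le_pow₀ hy1
    linarith
  · intro hy1
    have hylt : |y| < 1 := hy1
    -- bound on first coordinate
    set C : ℝ := max |x| (|y| / (1 - |y|)) with hC
    have h1y : 0 < 1 - |y| := by linarith
    have hCy : |y| ≤ C * (1 - |y|) := by
      have := le_max_right |x| (|y| / (1 - |y|))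
      calc |y| = |y| / (1 - |y|) * (1 - |y|) := by field_simp
        _ ≤ C * (1 - |y|) := by
            apply mul_le_mul_of_nonneg_right this h1y.le
    have hC0 : 0 ≤ C := le_trans (abs_nonneg x) (le_max_left _ _)
    have hyk : ∀ k, |y ^ 3 ^ k| ≤ |y| := by
      intro k
      rw [abs_pow]
      calc |y| ^ 3 ^ k ≤ |y| ^ 1 :=
        pow_le_pow_of_le_one (abs_nonneg y) hylt.le (Nat.one_le_pow _ _ (by norm_num))
        _ = |y| := pow_one _
    have hbound : ∀ k, |(g^[k] p) 0| ≤ C := by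
      intro k
      induction k with
      | zero =>
        simp only [Function.iterate_zero_apply]
        exact le_max_left _ _
      | succ n ih =>
        rw [hb]
        calc |(g^[n] p) 0 * y ^ 3 ^ n + y ^ 3 ^ n|
            ≤ |(g^[n] p) 0 * y ^ 3 ^ n| + |y ^ 3 ^ n| := abs_add_le _ _
          _ = |(g^[n] p) 0| * |y ^ 3 ^ n| + |y ^ 3 ^ n| := by rw [abs_mul]
          _ ≤ C * |y| + |y| := by
              have h3 := hyk n
              have h4 : |(g^[n] p) 0| * |y ^ 3 ^ n| ≤ C * |y| :=
                mul_le_mul ih h3 (abs_nonneg _) hC0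
              linarith
          _ ≤ C := by nlinarith
    -- coordinate 1 tendsto 0
    have ha_lim : Tendsto (fun k => y ^ 3 ^ k) atTop (𝓝 0) := by
      have h3 : Tendsto (fun k : ℕ => (3:ℕ) ^ k) atTop atTop :=
        tendsto_pow_atTop_atTop_of_one_lt (by norm_num)
      have hpow : Tendsto (fun n : ℕ => y ^ n) atTop (𝓝 0) :=
        tendsto_pow_atTop_nhds_zero_of_abs_lt_one hylt
      exact hpow.comp h3
    have h1 : Tendsto (fun k => (g^[k] p) 1) atTop (𝓝 0) := by
      simpa [ha] using ha_lim
    -- coordinate 0 tendsto 0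
    have h0 : Tendsto (fun k => (g^[k] p) 0) atTop (𝓝 0) := by
      rw [← tendsto_add_atTop_iff_nat 1]
      apply squeeze_zero_norm (a := fun k => |y ^ 3 ^ k| * (C + 1))
      · intro k
        rw [Real.norm_eq_abs, hb]
        calc |(g^[k] p) 0 * y ^ 3 ^ k + y ^ 3 ^ k|
            ≤ |(g^[k] p) 0| * |y ^ 3 ^ k| + |y ^ 3 ^ k| := by
              rw [← abs_mul]; exact abs_add_le _ _
          _ ≤ C * |y ^ 3 ^ k| + |y ^ 3 ^ k| :=
              add_le_add_left (mul_le_mul_of_nonneg_right (hbound k) (abs_nonneg _)) _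
          _ = |y ^ 3 ^ k| * (C + 1) := by ring
      · have : Tendsto (fun k => |y ^ 3 ^ k|) atTop (𝓝 0) := by
          simpa using ha_lim.abs
        simpa using this.mul_const (C + 1)
    -- combine
    refine ((PiLp.continuous_toLp 2 (fun _ : Fin 2 => ℝ)).tendsto 0).comp
      (f := fun k => (g^[k] p).ofLp) ?_
    rw [tendsto_pi_nhds]
    intro i
    fin_cases i
    · simpa using h0
    · simpa using h1
end

section
/- For the map g : ℝ² → ℝ² defined by g(x, y) = (4x² + y, x·y), the fixed point (0,0) is asymptotically stable: for every ε > 0 there exists δ > 0 such that ‖(x,y)‖ < δ implies ‖g⁽ᵏ⁾(x,y)‖ < ε for all k ∈ ℕ, and there exists r > 0 such that ‖(x,y)‖ < r implies g⁽ᵏ⁾(x,y) → (0,0) as k → ∞. -/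
open Filter Topology

private lemma euc_norm_le (p : EuclideanSpace ℝ (Fin 2)) : ‖p‖ ≤ |p 0| + |p 1| := by
  rw [EuclideanSpace.norm_eq, Fin.sum_univ_two]
  have h : ‖p 0‖ ^ 2 + ‖p 1‖ ^ 2 ≤ (|p 0| + |p 1|) ^ 2 := by
    simp only [Real.norm_eq_abs]
    nlinarith [abs_nonneg (p 0), abs_nonneg (p 1)]
  calc Real.sqrt (‖p 0‖ ^ 2 + ‖p 1‖ ^ 2) ≤ Real.sqrt ((|p 0| + |p 1|) ^ 2) :=
        Real.sqrt_le_sqrt h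
    _ = |p 0| + |p 1| := by
        rw [Real.sqrt_sq (by positivity)]

private lemma euc_coord_le (p : EuclideanSpace ℝ (Fin 2)) (i : Fin 2)
    (h : |p i| ^ 2 ≤ |p 0| ^ 2 + |p 1| ^ 2) : |p i| ≤ ‖p‖ := by
  rw [EuclideanSpace.norm_eq, Fin.sum_univ_two]
  simp only [Real.norm_eq_abs]
  calc |p i| = Real.sqrt (|p i| ^ 2) := by rw [Real.sqrt_sq (abs_nonneg _)]
    _ ≤ _ := Real.sqrt_le_sqrt h

/-- for `g(x,y) = (4x² + y, xy)`, the fixed point `(0,0)` is asymptotically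
stable (Euclidean norm on ℝ²). -/
theorem stmt_17 (g : EuclideanSpace ℝ (Fin 2) → EuclideanSpace ℝ (Fin 2))
    (hg : ∀ p : EuclideanSpace ℝ (Fin 2),
      g p 0 = 4 * (p 0) ^ 2 + p 1 ∧ g p 1 = p 0 * p 1) :
    (∀ ε > 0, ∃ δ > 0, ∀ p : EuclideanSpace ℝ (Fin 2), ‖p‖ < δ →
      ∀ k : ℕ, ‖g^[k] p‖ < ε) ∧
    (∃ r > 0, ∀ p : EuclideanSpace ℝ (Fin 2), ‖p‖ < r →
      Tendsto (fun k => g^[k] p) atTop (𝓝 0)) := by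
  set V : EuclideanSpace ℝ (Fin 2) → ℝ := fun p => |p 0| + 2 * |p 1| with hV
  have hV0 : ∀ p, 0 ≤ V p := fun p => by positivity
  have hVnorm : ∀ p, ‖p‖ ≤ V p := fun p => by
    have := euc_norm_le p
    have := abs_nonneg (p 1)
    simp only [hV]; linarith
  have hnormV : ∀ p, V p ≤ 3 * ‖p‖ := fun p => by
    have h0 := euc_coord_le p 0 (by nlinarith [sq_nonneg (p 1)])
    have h1 := euc_coord_le p 1 (by nlinarith [sq_nonneg (p 0)])
    simp only [hV]; linarith
  -- one-step contraction
  have step : ∀ p, V p ≤ 1 / 10 → V (g p) ≤ 3 / 5 * V p := by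
    intro p hp
    obtain ⟨h0, h1⟩ := hg p
    have ha := abs_nonneg (p 0)
    have hb := abs_nonneg (p 1)
    have hx : |p 0| ≤ 1 / 10 := by simp only [hV] at hp; linarith
    have e0 : |g p 0| ≤ 4 * |p 0| ^ 2 + |p 1| := by
      rw [h0]
      calc |4 * p 0 ^ 2 + p 1| ≤ |4 * p 0 ^ 2| + |p 1| := abs_add_le _ _
        _ = 4 * |p 0| ^ 2 + |p 1| := by rw [abs_mul, abs_pow]; simp [abs_of_nonneg]
    have e1 : |g p 1| = |p 0| * |p 1| := by rw [h1, abs_mul]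
    simp only [hV] at hp ⊢
    rw [e1]
    nlinarith [e0]
  -- iterated bound
  have iter : ∀ p, V p ≤ 1 / 10 → ∀ k, V (g^[k] p) ≤ (3 / 5) ^ k * V p := by
    intro p hp k
    induction k with
    | zero => simp
    | succ n ih =>
      have hpow : (3 / 5 : ℝ) ^ n ≤ 1 := pow_le_one₀ (by norm_num) (by norm_num)
      have hle : V (g^[n] p) ≤ 1 / 10 := by
        calc V (g^[n] p) ≤ (3 / 5) ^ n * V p := ih
          _ ≤ V p := mul_le_of_le_one_left (hV0 p) hpow
          _ ≤ 1 / 10 := by linarith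
      rw [Function.iterate_succ_apply']
      calc V (g (g^[n] p)) ≤ 3 / 5 * V (g^[n] p) := step _ hle
        _ ≤ 3 / 5 * ((3 / 5) ^ n * V p) := by nlinarith
        _ = (3 / 5) ^ (n + 1) * V p := by ring
  constructor
  · intro ε hε
    refine ⟨min (ε / 3) (1 / 30), by positivity, fun p hp k => ?_⟩
    have h1 : ‖p‖ < ε / 3 := lt_of_lt_of_le hp (min_le_left _ _)
    have h2 : ‖p‖ < 1 / 30 := lt_of_lt_of_le hp (min_le_right _ _)
    have hVp : V p ≤ 1 / 10 := le_trans (hnormV p) (by linarith)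
    have := iter p hVp k
    have hpow : (3 / 5 : ℝ) ^ k ≤ 1 := pow_le_one₀ (by norm_num) (by norm_num)
    have hVk : V (g^[k] p) ≤ V p := le_trans this (mul_le_of_le_one_left (hV0 p) hpow)
    have := hVnorm (g^[k] p)
    have := hnormV p
    linarith
  · refine ⟨1 / 30, by norm_num, fun p hp => ?_⟩
    have hVp : V p ≤ 1 / 10 := le_trans (hnormV p) (by linarith)
    rw [tendsto_zero_iff_norm_tendsto_zero]
    apply squeeze_zero (fun k => norm_nonneg _) (fun k => le_trans (hVnorm _) (iter p hVp k))
    have := tendsto_pow_atTop_nhds_zero_of_lt_one (show (0:ℝ) ≤ 3 / 5 by norm_num)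
      (show (3/5 : ℝ) < 1 by norm_num)
    simpa using this.mul_const (V p)
end
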